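/- arXiv:1708.04708 — 8 statements merged into one kernel-verified Lean document; each statement's English description precedes it below -/
import Mathlib

section
/- Let p : X̃ → X and q : Ỹ → Y be universal covering maps, let f : X → Y be a continuous map, and let f̃₀ : X̃ → Ỹ be a fixed lifting of f (i.e. q ∘ f̃₀ = f ∘ p). Then for any lifting f̃ : X̃ → Ỹ of f (i.e. q ∘ f̃ = f ∘ p) there exists a unique deck transformation h of q such that f̃ = h ∘ f̃₀. -/
open unitInterval

/-- A deck transformation of `q : E → B` is a self-homeomorphism `h` of `E` with `q ∘ h = q`. -/
def IsDeck {E B : Type*} [TopologicalSpace E] [TopologicalSpace B]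
    (q : E → B) (h : E ≃ₜ E) : Prop :=
  ∀ e, q (h e) = q e

/-- `ft` is a lifting of `f : X → Y` with respect to the covering maps `p, q`. -/
def IsLift {XT X YT Y : Type*} [TopologicalSpace XT] [TopologicalSpace X]
    [TopologicalSpace YT] [TopologicalSpace Y]
    (p : XT → X) (q : YT → Y) (f : X → Y) (ft : XT → YT) : Prop :=
  Continuous ft ∧ ∀ x, q (ft x) = f (p x)

/-- A homotopy `H : XT × I → YT` is fibre-preserving with respect to `p` and `q`, i.e.
fibre-preserving as a map with respect to `p × id : XT × I → X × I` and `q`. -/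
def IsFPHomotopy {XT X YT Y : Type*} [TopologicalSpace XT] [TopologicalSpace X]
    [TopologicalSpace YT] [TopologicalSpace Y]
    (p : XT → X) (q : YT → Y) (H : XT × I → YT) : Prop :=
  ∀ z z' : XT × I, p z.1 = p z'.1 → z.2 = z'.2 → q (H z) = q (H z')

open Set

section CoveringLifting

variable {E B : Type*} [TopologicalSpace E] [TopologicalSpace B] {q : E → B}

/-- helper: subsets of `I` cut out by a convex real predicate are preconnected. -/
theorem preconn_pred (P : ℝ → Prop) (hP : Convex ℝ {x | P x}) :
    IsPreconnected {s : I | P (s : ℝ)} := by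
  apply Topology.IsInducing.subtypeVal.isPreconnected_image.mp
  have : Subtype.val '' {s : I | P (s : ℝ)} = {x | P x} ∩ Icc (0:ℝ) 1 := by
    ext x
    constructor
    · rintro ⟨s, hs, rfl⟩; exact ⟨hs, s.2⟩
    · rintro ⟨hp, hx⟩; exact ⟨⟨x, hx⟩, hp, rfl⟩
  rw [this]
  exact (hP.inter (convex_Icc 0 1)).isPreconnected

theorem range_isClopen_of_covering (hq : IsCoveringMap q) : IsClopen (range q) := by
  refine ⟨?_, hq.isOpenMap.isOpen_range⟩
  rw [← isOpen_compl_iff, isOpen_iff_forall_mem_open]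
  intro b hb
  obtain ⟨_, U, hbU, hU, -, H, -⟩ := hq b
  refine ⟨U, ?_, hU, hbU⟩
  rintro y hy ⟨e, rfl⟩
  exact hb ⟨(H ⟨e, hy⟩).2.1, (H ⟨e, hy⟩).2.2⟩

theorem fiber_nonempty_of_covering (hq : IsCoveringMap q) {A : Type*} [TopologicalSpace A]
    [PreconnectedSpace A] (g : C(A, B)) (a0 : A) (e : E) (he : q e = g a0) (a : A) :
    Nonempty (q ⁻¹' {g a}) := by
  have hsub : range g ⊆ range q := (isPreconnected_range g.continuous).subset_isClopen
    (range_isClopen_of_covering hq) ⟨g a0, ⟨a0, rfl⟩, ⟨e, he⟩⟩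
  obtain ⟨x, hx⟩ := hsub ⟨a, rfl⟩
  exact ⟨⟨x, hx⟩⟩

theorem exists_path_lift (hq : IsCoveringMap q) (γ : C(I, B)) (e : E) (he : q e = γ 0) :
    ∃ Γ : C(I, E), Γ 0 = e ∧ ∀ t, q (Γ t) = γ t := by
  classical
  set S : Set ℝ :=
    {t | t ∈ Icc (0:ℝ) 1 ∧ ∃ Γ : C(I, E), Γ 0 = e ∧ ∀ s : I, (s:ℝ) ≤ t → q (Γ s) = γ s} with hS
  have h0S : (0:ℝ) ∈ S := by
    refine ⟨⟨le_refl 0, zero_le_one⟩, ContinuousMap.const I e, rfl, fun s hs => ?_⟩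
    have : s = 0 := Subtype.ext (le_antisymm hs s.2.1)
    rw [this]; exact he
  have bdd : BddAbove S := ⟨1, fun t ht => ht.1.2⟩
  set u := sSup S with hu
  have h0u : 0 ≤ u := le_csSup bdd h0S
  have hu1 : u ≤ 1 := csSup_le ⟨0, h0S⟩ fun t ht => ht.1.2
  set uI : I := ⟨u, h0u, hu1⟩ with huI
  haveI := fiber_nonempty_of_covering hq γ 0 e he uI
  set T := (hq (γ uI)).toTrivialization with hT
  have hbase : γ uI ∈ T.baseSet := (hq (γ uI)).mem_toTrivialization_baseSet
  have hVo : IsOpen (γ ⁻¹' T.baseSet) := T.open_baseSet.preimage γ.continuous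
  obtain ⟨δ, hδpos, hδ⟩ := Metric.isOpen_iff.mp hVo uI hbase
  -- pick t ∈ S close to u
  obtain ⟨t, htS, hlt⟩ := exists_lt_of_lt_csSup ⟨0, h0S⟩ (show u - δ/2 < u by linarith)
  have htu : t ≤ u := le_csSup bdd htS
  obtain ⟨⟨ht0, ht1⟩, Γ, hΓ0, hΓ⟩ := htS
  set tI : I := ⟨t, ht0, ht1⟩ with htI
  set w : ℝ := min (u + δ/2) 1 with hw
  have hw0 : 0 ≤ w := le_min (by linarith) zero_le_one
  have hw1 : w ≤ 1 := min_le_right _ _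
  have htw : t ≤ w := le_min (by linarith) ht1
  have huw : u ≤ w := le_min (by linarith) hu1
  have key : ∀ s : I, t ≤ (s:ℝ) → (s:ℝ) ≤ w → γ s ∈ T.baseSet := by
    intro s h1 h2
    apply hδ
    rw [Metric.mem_ball, Subtype.dist_eq, Real.dist_eq, abs_sub_lt_iff]
    have hsw : (s:ℝ) ≤ u + δ/2 := h2.trans (min_le_left _ _)
    constructor <;> [skip; skip] <;> simp only [huI] <;> linarith
  have γtb : γ tI ∈ T.baseSet := key tI le_rfl htw
  have qΓt : q (Γ tI) = γ tI := hΓ tI le_rfl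
  set i := (T (Γ tI)).2 with hi
  set sec : B → E := fun b => T.toPartialHomeomorph.symm (b, i) with hsec
  have hmemT : ∀ b ∈ T.baseSet, (b, i) ∈ T.target := by
    intro b hb; rw [T.target_eq]; exact ⟨hb, mem_univ _⟩
  have hsec_q : ∀ b ∈ T.baseSet, q (sec b) = b := fun b hb => T.proj_symm_apply (hmemT b hb)
  have hsec_cont : ContinuousOn sec T.baseSet := by
    apply T.toPartialHomeomorph.continuousOn_symm.comp
      (Continuous.continuousOn (by fun_prop))
    intro b hb; exact hmemT b hb
  have hsrc : Γ tI ∈ T.source := T.mem_source.mpr (by rw [qΓt]; exact γtb)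
  have hsec_t : sec (γ tI) = Γ tI := by
    have h1 : ((γ tI : B), i) = T (Γ tI) := Prod.ext (by rw [T.coe_fst hsrc, qΓt]) rfl
    rw [hsec]; simp only; rw [h1]
    exact T.toPartialHomeomorph.left_inv hsrc
  -- clamp
  set cl : I → I := fun s => ⟨max (min (s:ℝ) w) t,
    ⟨le_max_of_le_right ht0, max_le ((min_le_left _ _).trans s.2.2) ht1⟩⟩ with hcl
  have hcl_cont : Continuous cl :=
    Continuous.subtype_mk ((continuous_subtype_val.min continuous_const).max continuous_const) _
  have hcl_mem : ∀ s, t ≤ ((cl s : I) : ℝ) ∧ ((cl s : I) : ℝ) ≤ w := fun s =>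
    ⟨le_max_right _ _, max_le (min_le_right _ _) htw⟩
  set Γ' : I → E := fun s => if (s:ℝ) ≤ t then Γ s else sec (γ (cl s)) with hΓ'
  have hcont : Continuous Γ' := by
    apply Continuous.if_le Γ.continuous _ continuous_subtype_val continuous_const
    · intro s hs
      have hst : s = tI := Subtype.ext hs
      have hct : cl tI = tI := by
        apply Subtype.ext
        show t ⊓ w ⊔ t = t
        rw [min_eq_left htw, max_self]
      rw [hst, hct, hsec_t]
    · exact hsec_cont.comp_continuous (γ.continuous.comp hcl_cont)
        fun s => key (cl s) (hcl_mem s).1 (hcl_mem s).2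
  have hwS : w ∈ S := by
    refine ⟨⟨hw0, hw1⟩, ⟨Γ', hcont⟩, ?_, fun s hs => ?_⟩
    · show Γ' 0 = e
      rw [hΓ']; simp only
      rw [if_pos (by exact_mod_cast ht0 : ((0:I):ℝ) ≤ t)]
      exact hΓ0
    · show q (Γ' s) = γ s
      rw [hΓ']; simp only
      by_cases h : (s:ℝ) ≤ t
      · rw [if_pos h]; exact hΓ s h
      · push_neg at h
        rw [if_neg (not_le.mpr h)]
        have hcls : cl s = s := by
          apply Subtype.ext
          show (s:ℝ) ⊓ w ⊔ t = s
          rw [min_eq_left hs, max_eq_left h.le]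
        rw [hcls]
        exact hsec_q _ (key s h.le hs)
  have hwu : w ≤ u := le_csSup bdd hwS
  have hu1' : u = 1 := by
    by_contra hne
    have : u < 1 := lt_of_le_of_ne hu1 hne
    have : u < w := lt_min (by linarith) this
    linarith
  have hw1' : w = 1 := by rw [hw, hu1']; exact min_eq_right (by linarith)
  rw [hw1'] at hwS
  obtain ⟨_, Γf, hΓf0, hΓf⟩ := hwS
  exact ⟨Γf, hΓf0, fun s => hΓf s s.2.2⟩


theorem exists_section_through {F : Type*} [TopologicalSpace F] (T : Bundle.Trivialization F q)
    (x : E) (hx : q x ∈ T.baseSet) :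
    ∃ sec : B → E, ContinuousOn sec T.baseSet ∧ (∀ b ∈ T.baseSet, q (sec b) = b) ∧
      sec (q x) = x := by
  set i := (T x).2 with hi
  refine ⟨fun b => T.toPartialHomeomorph.symm (b, i), ?_, ?_, ?_⟩
  · apply T.toPartialHomeomorph.continuousOn_symm.comp (Continuous.continuousOn (by fun_prop))
    intro b hb
    rw [T.target_eq]; exact ⟨hb, mem_univ _⟩
  · intro b hb
    exact T.proj_symm_apply (by rw [T.target_eq]; exact ⟨hb, mem_univ _⟩)
  · have hsrc : x ∈ T.source := T.mem_source.mpr hx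
    have h1 : ((q x : B), i) = T x := Prod.ext (by rw [T.coe_fst hsrc]) rfl
    simp only
    rw [h1]
    exact T.toPartialHomeomorph.left_inv hsrc

theorem path_lift_unique (hq : IsCoveringMap q) (γ : C(I, B)) (Γ₁ Γ₂ : C(I, E))
    (h1 : ∀ t, q (Γ₁ t) = γ t) (h2 : ∀ t, q (Γ₂ t) = γ t) (h0 : Γ₁ 0 = Γ₂ 0) : Γ₁ = Γ₂ := by
  have := hq.eq_of_comp_eq (A := I) Γ₁.continuous Γ₂.continuous
    (funext fun t => (h1 t).trans (h2 t).symm) 0 h0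
  exact ContinuousMap.ext fun t => congrFun this t

noncomputable def theLift (hq : IsCoveringMap q) (γ : C(I, B)) (e : E) (he : q e = γ 0) :
    C(I, E) :=
  (exists_path_lift hq γ e he).choose

theorem theLift_zero (hq : IsCoveringMap q) (γ : C(I, B)) (e : E) (he : q e = γ 0) :
    theLift hq γ e he 0 = e :=
  (exists_path_lift hq γ e he).choose_spec.1

theorem theLift_q (hq : IsCoveringMap q) (γ : C(I, B)) (e : E) (he : q e = γ 0) (t : I) :
    q (theLift hq γ e he t) = γ t :=
  (exists_path_lift hq γ e he).choose_spec.2 t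

theorem theLift_eq (hq : IsCoveringMap q) (γ : C(I, B)) (e : E) (he : q e = γ 0)
    (Γ : C(I, E)) (hΓ0 : Γ 0 = e) (hΓ : ∀ t, q (Γ t) = γ t) : Γ = theLift hq γ e he :=
  path_lift_unique hq γ Γ _ hΓ (theLift_q hq γ e he) (by rw [hΓ0, theLift_zero])

theorem monodromy (hq : IsCoveringMap q) (H : C(I × I, B)) (e : E)
    (he : q e = H (0, 0))
    (h0 : ∀ s, H (s, 0) = H (0, 0)) (h1 : ∀ s, H (s, 1) = H (0, 1))
    (Γ₀ Γ₁ : C(I, E))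
    (hΓ₀q : ∀ t, q (Γ₀ t) = H (0, t)) (hΓ₀0 : Γ₀ 0 = e)
    (hΓ₁q : ∀ t, q (Γ₁ t) = H (1, t)) (hΓ₁0 : Γ₁ 0 = e) :
    Γ₀ 1 = Γ₁ 1 := by
  classical
  haveI hne : ∀ z, Nonempty (q ⁻¹' {H z}) := fiber_nonempty_of_covering hq H (0, 0) e he
  have hes : ∀ s : I, q e = (H.curry s) 0 := fun s => by
    rw [ContinuousMap.curry_apply, h0 s]; exact he
  set Γ : I → C(I, E) := fun s => theLift hq (H.curry s) e (hes s) with hΓdef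
  have hΓq : ∀ s t, q (Γ s t) = H (s, t) := fun s t => theLift_q hq (H.curry s) e (hes s) t
  have hΓz : ∀ s, Γ s 0 = e := fun s => theLift_zero hq (H.curry s) e (hes s)
  set g : I → E := fun s => Γ s 1 with hgdef
  -- local constancy
  have LC : ∀ s0 : I, ∃ ε > (0:ℝ), ∀ s : I, dist s s0 < ε → g s = g s0 := by
    intro s0
    -- Lebesgue number
    obtain ⟨δ, hδpos, hδ⟩ := lebesgue_number_lemma_of_metric
      (isCompact_univ : IsCompact (univ : Set (I × I)))
      (fun b => ((hq (H b)).toTrivialization.open_baseSet).preimage H.continuous)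
      (fun z _ => mem_iUnion.mpr ⟨z, (hq (H z)).mem_toTrivialization_baseSet⟩)
    obtain ⟨n, hn⟩ := exists_nat_gt (1/δ)
    have hn0 : (0:ℝ) < n := lt_trans (by positivity) hn
    have h1n : (1:ℝ)/n < δ := by
      rw [div_lt_iff₀ hn0]
      have := (div_lt_iff₀ hδpos).mp hn
      linarith [mul_comm (n:ℝ) δ]
    set tc : ℕ → I := fun j => ⟨min ((j:ℝ)/n) 1, le_min (by positivity) zero_le_one,
      min_le_right _ _⟩ with htcdef
    have htc : ∀ j : ℕ, j ≤ n → ((tc j : I) : ℝ) = j/n := fun j hj =>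
      min_eq_left ((div_le_one hn0).mpr (by exact_mod_cast hj))
    have htc0 : tc 0 = 0 := Subtype.ext (by
      show min (((0:ℕ):ℝ)/n) 1 = 0
      simp)
    have htcn : tc n = 1 := Subtype.ext (by
      show min ((n:ℝ)/n) 1 = 1
      rw [div_self (ne_of_gt hn0), min_self])
    have hmono : ∀ j : ℕ, ((tc j : I) : ℝ) ≤ ((tc (j+1) : I) : ℝ) := fun j =>
      min_le_min ((div_le_div_iff_of_pos_right hn0).mpr (by exact_mod_cast Nat.le_succ j)) le_rfl
    have hdiff : ∀ j : ℕ, j < n → ((tc (j+1) : I) : ℝ) - ((tc j : I) : ℝ) ≤ 1/n := by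
      intro j hj
      rw [htc _ hj, htc _ (Nat.le_of_lt hj)]
      push_cast
      apply le_of_eq
      ring
    -- local sections along the strip
    have hU : ∀ j : ℕ, ∃ (U : Set B) (sec : B → E),
        (∀ z : I × I, dist z ((s0, tc j) : I × I) < δ → H z ∈ U) ∧
        ContinuousOn sec U ∧ (∀ b ∈ U, q (sec b) = b) ∧
        sec (H (s0, tc j)) = Γ s0 (tc j) := by
      intro j
      obtain ⟨b, hb⟩ := hδ ((s0, tc j)) (mem_univ _)
      have hx : q (Γ s0 (tc j)) ∈ (hq (H b)).toTrivialization.baseSet := by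
        rw [hΓq]
        exact hb (Metric.mem_ball_self hδpos)
      obtain ⟨sec, h1', h2', h3'⟩ := exists_section_through (hq (H b)).toTrivialization _ hx
      rw [hΓq] at h3'
      exact ⟨_, sec, fun z hz => hb hz, h1', h2', h3'⟩
    choose U Sec hUmem hSecCont hSecq hSecpt using hU
    set J' : Set I := {s : I | |(s:ℝ) - (s0:ℝ)| < δ/2} with hJ'def
    have hJ'pre : IsPreconnected J' := by
      apply preconn_pred (fun x => |x - (s0:ℝ)| < δ/2)
      have : {x : ℝ | |x - (s0:ℝ)| < δ/2} = Metric.ball (s0:ℝ) (δ/2) := by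
        ext x; simp [Metric.mem_ball, Real.dist_eq]
      rw [this]
      exact convex_ball _ _
    have hs0J' : s0 ∈ J' := by simp [hJ'def, hδpos]
    have hstrip : ∀ j : ℕ, j < n → ∀ s ∈ J', ∀ t : I,
        ((tc j : I):ℝ) ≤ t → (t:ℝ) ≤ ((tc (j+1) : I):ℝ) → H (s, t) ∈ U j := by
      intro j hj s hs t h1' h2'
      apply hUmem j
      rw [Prod.dist_eq]
      apply max_lt
      · rw [Subtype.dist_eq, Real.dist_eq]
        exact lt_of_lt_of_le hs (by linarith)
      · rw [Subtype.dist_eq, Real.dist_eq, abs_of_nonneg (by linarith)]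
        have := hdiff j hj
        linarith
    -- main induction
    have main : ∀ j, j ≤ n → ∀ s ∈ J', Γ s (tc j) =
        (if j = 0 then e else Sec (j-1) (H (s, tc j))) := by
      intro j
      induction j with
      | zero =>
        intro _ s hs
        rw [if_pos rfl, htc0]
        exact hΓz s
      | succ k ih =>
        intro hk s hs
        have hkn : k < n := Nat.lt_of_succ_le hk
        have hbasek : ∀ s' ∈ J', H (s', tc k) ∈ U k := fun s' hs' =>
          hstrip k hkn s' hs' (tc k) le_rfl (hmono k)
        have hglue : ∀ s' ∈ J', Γ s' (tc k) = Sec k (H (s', tc k)) := by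
          have hΦcont : ContinuousOn
              (fun s' : I => if k = 0 then e else Sec (k-1) (H (s', tc k))) J' := by
            by_cases hk0 : k = 0
            · simp only [if_pos hk0]; exact continuousOn_const
            · simp only [if_neg hk0]
              obtain ⟨m, rfl⟩ := Nat.exists_eq_succ_of_ne_zero hk0
              simp only [Nat.succ_sub_one]
              apply (hSecCont m).comp
                (Continuous.continuousOn (by fun_prop : Continuous fun s' : I => H (s', tc (m+1))))
              intro s' hs'
              exact hstrip m (Nat.lt_of_succ_lt hkn) s' hs' (tc (m+1)) (hmono m) le_rfl
          have hRcont : ContinuousOn (fun s' : I => Sec k (H (s', tc k))) J' :=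
            (hSecCont k).comp
              (Continuous.continuousOn (by fun_prop : Continuous fun s' : I => H (s', tc k)))
              (fun s' hs' => hbasek s' hs')
          have heq : Set.EqOn
              (q ∘ fun s' : I => if k = 0 then e else Sec (k-1) (H (s', tc k)))
              (q ∘ fun s' : I => Sec k (H (s', tc k))) J' := by
            intro s' hs'
            show q (if k = 0 then e else Sec (k-1) (H (s', tc k))) = q (Sec k (H (s', tc k)))
            rw [hSecq k _ (hbasek s' hs')]
            by_cases hk0 : k = 0
            · rw [if_pos hk0, hk0, htc0, h0 s']
              exact he
            · rw [if_neg hk0]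
              obtain ⟨m, rfl⟩ := Nat.exists_eq_succ_of_ne_zero hk0
              simp only [Nat.succ_sub_one]
              exact hSecq m _ (hstrip m (Nat.lt_of_succ_lt hkn) s' hs' (tc (m+1)) (hmono m) le_rfl)
          have hpt : (fun s' : I => if k = 0 then e else Sec (k-1) (H (s', tc k))) s0
              = (fun s' : I => Sec k (H (s', tc k))) s0 := by
            show (if k = 0 then e else Sec (k-1) (H (s0, tc k))) = Sec k (H (s0, tc k))
            rw [hSecpt k]
            exact (ih (Nat.le_of_lt hkn) s0 hs0J').symm
          have hEq := hq.eqOn_of_comp_eqOn hJ'pre hΦcont hRcont heq hs0J' hpt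
          intro s' hs'
          rw [ih (Nat.le_of_lt hkn) s' hs']
          exact hEq hs'
        -- interval uniqueness
        set Aset : Set I := {t : I | ((tc k : I):ℝ) ≤ t ∧ (t:ℝ) ≤ ((tc (k+1) : I):ℝ)} with hAdef
        have hApre : IsPreconnected Aset :=
          preconn_pred (fun x => ((tc k : I):ℝ) ≤ x ∧ x ≤ ((tc (k+1) : I):ℝ)) (convex_Icc _ _)
        have hInt : Set.EqOn (fun t => Γ s t) (fun t => Sec k (H (s, t))) Aset := by
          apply hq.eqOn_of_comp_eqOn hApre ((Γ s).continuous.continuousOn)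
            ((hSecCont k).comp
              (Continuous.continuousOn (by fun_prop : Continuous fun t : I => H (s, t)))
              (fun t ht => hstrip k hkn s hs t ht.1 ht.2))
            ?_ (show tc k ∈ Aset from ⟨le_rfl, hmono k⟩) (hglue s hs)
          intro t ht
          show q (Γ s t) = q (Sec k (H (s, t)))
          rw [hΓq, hSecq k _ (hstrip k hkn s hs t ht.1 ht.2)]
        have := hInt (show tc (k+1) ∈ Aset from ⟨hmono k, le_rfl⟩)
        rw [if_neg (Nat.succ_ne_zero k)]
        simpa using this
    -- conclude local constancy
    have hnne : n ≠ 0 := by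
      intro h
      rw [h] at hn0
      simp at hn0
    refine ⟨δ/2, by positivity, fun s hds => ?_⟩
    have hsJ' : s ∈ J' := by
      rwa [Subtype.dist_eq, Real.dist_eq] at hds
    have h1' := main n le_rfl s hsJ'
    have h2' := main n le_rfl s0 hs0J'
    rw [if_neg hnne] at h1' h2'
    show Γ s 1 = Γ s0 1
    rw [← htcn, h1', h2', htcn, h1 s, h1 s0]
  -- clopen argument
  have gconst : ∀ s : I, g s = g 0 := by
    have hclopen : IsClopen {s : I | g s = g 0} := by
      constructor
      · rw [← isOpen_compl_iff]
        rw [Metric.isOpen_iff]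
        intro s hs
        obtain ⟨ε, hε, hloc⟩ := LC s
        exact ⟨ε, hε, fun s' hs' h' => hs (show g s = g 0 from
          (hloc s' (Metric.mem_ball.mp hs')).symm.trans h')⟩
      · rw [Metric.isOpen_iff]
        intro s hs
        obtain ⟨ε, hε, hloc⟩ := LC s
        exact ⟨ε, hε, fun s' hs' => by show g s' = g 0; rw [hloc s' hs', hs]⟩
    intro s
    have := hclopen.eq_univ ⟨0, rfl⟩
    have hsm : s ∈ {s : I | g s = g 0} := this ▸ mem_univ s
    exact hsm
  have hΓ00 : Γ₀ = Γ 0 := theLift_eq hq (H.curry 0) e (hes 0) Γ₀ hΓ₀0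
    (fun t => by rw [ContinuousMap.curry_apply]; exact hΓ₀q t)
  have hΓ11 : Γ₁ = Γ 1 := theLift_eq hq (H.curry 1) e (hes 1) Γ₁ hΓ₁0
    (fun t => by rw [ContinuousMap.curry_apply]; exact hΓ₁q t)
  show Γ₀ 1 = Γ₁ 1
  rw [hΓ00, hΓ11]
  exact (gconst 0).trans (gconst 1).symm
theorem deck_exists [SimplyConnectedSpace E] [LocallyPathConnectedSpace E]
    (hq : IsCoveringMap q) (e0 e1 : E) (h01 : q e0 = q e1) :
    ∃ g : E → E, Continuous g ∧ (∀ y, q (g y) = q y) ∧ g e0 = e1 := by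
  classical
  have qc : Continuous q := hq.continuous
  set Q : ∀ y : E, Path e0 y → C(I, B) := fun y γ => (⟨q, qc⟩ : C(E, B)).comp γ.toContinuousMap
    with hQ
  have hQ0 : ∀ (y) (γ : Path e0 y), q e1 = Q y γ 0 := by
    intro y γ
    show q e1 = q (γ 0)
    rw [γ.source, h01]
  set L : ∀ y : E, Path e0 y → E := fun y γ => theLift hq (Q y γ) e1 (hQ0 y γ) 1 with hL
  have hLq : ∀ (y) (γ : Path e0 y), q (L y γ) = q y := by
    intro y γ
    show q (theLift hq (Q y γ) e1 (hQ0 y γ) 1) = q y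
    rw [theLift_q hq (Q y γ) e1 (hQ0 y γ) 1]
    show q (γ 1) = q y
    rw [γ.target]
  -- well-definedness
  have hwd : ∀ (y) (γ γ' : Path e0 y), L y γ = L y γ' := by
    intro y γ γ'
    obtain ⟨Hom⟩ : Path.Homotopic γ γ' := SimplyConnectedSpace.paths_homotopic γ γ'
    set HB : C(I × I, B) := (⟨q, qc⟩ : C(E, B)).comp Hom.toContinuousMap with hHB
    have hHB0 : ∀ t : I, HB (0, t) = q (γ t) := fun t => by
      show q (Hom (0, t)) = q (γ t)
      rw [Hom.apply_zero]
      rfl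
    have hHB1 : ∀ t : I, HB (1, t) = q (γ' t) := fun t => by
      show q (Hom (1, t)) = q (γ' t)
      rw [Hom.apply_one]
      rfl
    have hsrc : ∀ s : I, HB (s, 0) = HB (0, 0) := fun s => by
      show q (Hom (s, 0)) = q (Hom (0, 0))
      rw [Hom.source, Hom.source]
    have htgt : ∀ s : I, HB (s, 1) = HB (0, 1) := fun s => by
      show q (Hom (s, 1)) = q (Hom (0, 1))
      rw [Hom.target, Hom.target]
    have hee : q e1 = HB (0, 0) := by
      rw [hHB0 0]
      exact hQ0 y γ
    show theLift hq (Q y γ) e1 (hQ0 y γ) 1 = theLift hq (Q y γ') e1 (hQ0 y γ') 1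
    apply monodromy hq HB e1 hee hsrc htgt
    · intro t; rw [theLift_q hq (Q y γ) e1 (hQ0 y γ) t, hHB0]; rfl
    · exact theLift_zero _ _ _ _
    · intro t; rw [theLift_q hq (Q y γ') e1 (hQ0 y γ') t, hHB1]; rfl
    · exact theLift_zero _ _ _ _
  refine ⟨fun y => L y (PathConnectedSpace.somePath e0 y), ?_, ?_, ?_⟩
  · -- continuity
    rw [continuous_iff_continuousAt]
    intro y
    haveI : Nonempty (q ⁻¹' {q y}) := ⟨⟨y, rfl⟩⟩
    set T := (hq (q y)).toTrivialization with hT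
    have hb : q y ∈ T.baseSet := (hq (q y)).mem_toTrivialization_baseSet
    set gy : E := L y (PathConnectedSpace.somePath e0 y) with hgy
    have hgyb : q gy ∈ T.baseSet := by rw [hLq]; exact hb
    obtain ⟨sec, hsc, hsq, hspt⟩ := exists_section_through T gy hgyb
    have hspt' : sec (q y) = gy := by rw [hLq] at hspt; exact hspt
    obtain ⟨V, ⟨hVo, hyV, hVpc⟩, hVsub⟩ := (isOpen_isPathConnected_basis y).mem_iff.mp
      ((T.open_baseSet.preimage qc).mem_nhds (show y ∈ q ⁻¹' T.baseSet from hb))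
    have claim : ∀ y' ∈ V, L y' (PathConnectedSpace.somePath e0 y') = sec (q y') := by
      intro y' hy'
      have hjoin : JoinedIn V y y' := hVpc.joinedIn y hyV y' hy'
      set δp : Path y y' := hjoin.somePath with hδp
      have hδmem : ∀ t, δp t ∈ V := hjoin.somePath_mem
      set γ1 : Path e0 y := PathConnectedSpace.somePath e0 y with hγ1
      set γ2 : Path e0 y' := γ1.trans δp with hγ2
      have hΔcont : Continuous fun t : I => sec (q (δp t)) :=
        hsc.comp_continuous (qc.comp δp.continuous) fun t => hVsub (hδmem t)
      set Δ : Path gy (sec (q y')) :=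
        { toFun := fun t => sec (q (δp t))
          continuous_toFun := hΔcont
          source' := by
            show sec (q (δp 0)) = gy
            rw [δp.source, hspt']
          target' := by
            show sec (q (δp 1)) = sec (q y')
            rw [δp.target] } with hΔ
      set Γp : Path e1 gy :=
        { toFun := fun t => theLift hq (Q y γ1) e1 (hQ0 y γ1) t
          continuous_toFun := (theLift hq (Q y γ1) e1 (hQ0 y γ1)).continuous
          source' := theLift_zero hq (Q y γ1) e1 (hQ0 y γ1)
          target' := rfl } with hΓp
      set Θ := Γp.trans Δ with hΘ
      have hΘq : ∀ t, q (Θ t) = Q y' γ2 t := by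
        intro t
        show q ((Γp.trans Δ) t) = q ((γ1.trans δp) t)
        rw [Path.trans_apply, Path.trans_apply]
        split_ifs with hsplit
        · show q (theLift hq (Q y γ1) e1 (hQ0 y γ1) _) = _
          rw [theLift_q hq (Q y γ1) e1 (hQ0 y γ1) _]
          rfl
        · show q (sec (q (δp _))) = _
          exact hsq _ (hVsub (hδmem _))
      have hΘlift : (Θ : Path e1 (sec (q y'))).toContinuousMap
          = theLift hq (Q y' γ2) e1 (hQ0 y' γ2) :=
        theLift_eq hq (Q y' γ2) e1 (hQ0 y' γ2) _ (Θ.source) hΘq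
      have hend : L y' γ2 = sec (q y') := by
        show theLift hq (Q y' γ2) e1 (hQ0 y' γ2) 1 = sec (q y')
        rw [← hΘlift]
        exact Θ.target
      rw [hwd y' (PathConnectedSpace.somePath e0 y') γ2]
      exact hend
    have hfcont : ContinuousAt (fun y' => sec (q y')) y :=
      (hsc.continuousAt (T.open_baseSet.mem_nhds hb)).comp qc.continuousAt
    apply hfcont.congr
    filter_upwards [hVo.mem_nhds hyV] with y' hy'
    exact (claim y' hy').symm
  · exact fun y => hLq y _
  · -- g e0 = e1
    show L e0 (PathConnectedSpace.somePath e0 e0) = e1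
    rw [hwd e0 (PathConnectedSpace.somePath e0 e0) (Path.refl e0)]
    show theLift hq (Q e0 (Path.refl e0)) e1 (hQ0 _ _) 1 = e1
    rw [← theLift_eq hq (Q e0 (Path.refl e0)) e1 (hQ0 _ _) (ContinuousMap.const I e1) rfl
      (fun t => by show q e1 = q ((Path.refl e0) t); rw [Path.refl_apply]; exact h01.symm)]
    rfl


end CoveringLifting

/-- Every lifting of `f` differs from a fixed lifting `f0` by a unique deck transformation. -/
theorem stmt_0 {X Y XT YT : Type*} [TopologicalSpace X] [TopologicalSpace Y]
    [TopologicalSpace XT] [TopologicalSpace YT]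
    [PathConnectedSpace X] [PathConnectedSpace Y]
    [LocallyPathConnectedSpace X] [LocallyPathConnectedSpace Y]
    [SimplyConnectedSpace XT] [SimplyConnectedSpace YT]
    [LocallyPathConnectedSpace XT] [LocallyPathConnectedSpace YT]
    (p : XT → X) (q : YT → Y) (hp : IsCoveringMap p) (hq : IsCoveringMap q)
    (f : X → Y) (hf : Continuous f)
    (f0 : XT → YT) (hf0 : IsLift p q f f0)
    (ft : XT → YT) (hft : IsLift p q f ft) :
    ∃! h : YT ≃ₜ YT, IsDeck q h ∧ ft = ⇑h ∘ f0 := by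
  obtain ⟨hf0c, hf0e⟩ := hf0
  obtain ⟨hftc, hfte⟩ := hft
  obtain ⟨x0⟩ : Nonempty XT := PathConnectedSpace.nonempty
  have h01 : q (f0 x0) = q (ft x0) := by rw [hf0e, hfte]
  obtain ⟨g1, hg1c, hg1q, hg1e⟩ := deck_exists hq (f0 x0) (ft x0) h01
  obtain ⟨g2, hg2c, hg2q, hg2e⟩ := deck_exists hq (ft x0) (f0 x0) h01.symm
  have h21 : g1 ∘ g2 = id := hq.eq_of_comp_eq (hg1c.comp hg2c) continuous_id
    (funext fun y => by simp [hg1q, hg2q]) (ft x0) (by simp [hg2e, hg1e])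
  have h12 : g2 ∘ g1 = id := hq.eq_of_comp_eq (hg2c.comp hg1c) continuous_id
    (funext fun y => by simp [hg1q, hg2q]) (f0 x0) (by simp [hg1e, hg2e])
  set h : YT ≃ₜ YT :=
    { toFun := g1
      invFun := g2
      left_inv := fun y => congrFun h12 y
      right_inv := fun y => congrFun h21 y
      continuous_toFun := hg1c
      continuous_invFun := hg2c } with hh
  have hdeck : IsDeck q h := hg1q
  have hcomp : ft = ⇑h ∘ f0 := hq.eq_of_comp_eq (A := XT) hftc (hg1c.comp hf0c)
    (funext fun x => by simp [hfte, hg1q, hf0e, hh]) x0 (by simp [hh, hg1e])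
  refine ⟨h, ⟨hdeck, hcomp⟩, ?_⟩
  rintro h' ⟨hd', hc'⟩
  have hfun : ⇑h' = ⇑h := hq.eq_of_comp_eq h'.continuous h.continuous
    (funext fun y => by rw [Function.comp_apply, Function.comp_apply, hd' y, hdeck y]) (f0 x0)
    (by
      have e1 := congrFun hc' x0
      have e2 := congrFun hcomp x0
      simp only [Function.comp_apply] at e1 e2
      rw [← e1, ← e2])
  exact Homeomorph.ext fun y => congrFun hfun y
end

section
/- Let p : X̃ → X and q : Ỹ → Y be universal covering maps, f : X → Y a continuous map, and f̃₀ a fixed lifting of f. Then the map sending a deck transformation h of q to the composite h ∘ f̃₀ is a bijection from the group of deck transformations of q onto the set of all liftings of f. -/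
open unitInterval

section Lifting

universe uE
variable {E : Type uE} {B : Type*} [TopologicalSpace E] [TopologicalSpace B] {q : E → B}

/-- Local sheet data for a covering map at a point `b`. -/
private lemma fiber_nonempty (hq : IsCoveringMap q) (b : B)
    (h : ∀ U : Set B, IsOpen U → b ∈ U → ∃ e, q e ∈ U) : Nonempty (q ⁻¹' {b}) := by
  by_contra hne
  rw [not_nonempty_iff] at hne
  obtain ⟨_, U, hbU, hUo, -, Hh, -⟩ := hq b
  obtain ⟨e, he⟩ := h U hUo hbU
  exact isEmptyElim (Hh ⟨e, he⟩).2

private lemma local_sheet (hq : IsCoveringMap q) (b : B) [Nonempty (q ⁻¹' {b})] :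
    ∃ (U : Set B) (F : Type uE) (_ : TopologicalSpace F) (ψ : B × F → E) (ι : E → F),
      IsOpen U ∧ b ∈ U ∧ ContinuousOn ψ (U ×ˢ (Set.univ : Set F)) ∧
      ContinuousOn ι (q ⁻¹' U) ∧
      (∀ bf : B × F, bf.1 ∈ U → q (ψ bf) = bf.1) ∧
      (∀ e₁ : E, q e₁ ∈ U → ψ (q e₁, ι e₁) = e₁) := by
  let T := (hq b).toTrivialization
  refine ⟨T.baseSet, ↥(q ⁻¹' {b}), inferInstance,
    fun bf => T.toOpenPartialHomeomorph.symm bf, fun e₁ => (T e₁).2,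
    T.open_baseSet, (hq b).mem_toTrivialization_baseSet, ?_, ?_, ?_, ?_⟩
  · exact T.toOpenPartialHomeomorph.continuousOn_symm.mono (by rw [T.target_eq])
  · have h1 : ContinuousOn (⇑T) T.source := by
      have := T.toOpenPartialHomeomorph.continuousOn
      simpa using this
    have h2 : T.source = q ⁻¹' T.baseSet := T.source_eq
    exact continuous_snd.comp_continuousOn (h2 ▸ h1)
  · intro bf hbf
    exact T.proj_symm_apply (by rw [T.target_eq]; exact ⟨hbf, trivial⟩)
  · intro e₁ he₁
    have hsrc : e₁ ∈ T.source := T.mem_source.2 he₁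
    have hfst : (q e₁, (T e₁).2) = T e₁ := Prod.ext (T.coe_fst hsrc).symm rfl
    rw [hfst]
    have := T.toOpenPartialHomeomorph.left_inv hsrc
    simpa using this

private lemma continuousOn_if_le' {β γ' : Type*} [TopologicalSpace β] [TopologicalSpace γ']
    {s : Set β} {f' g' : β → γ'} {a : β → ℝ} {c : ℝ}
    (hf : ContinuousOn f' s) (hg : ContinuousOn g' s) (ha : Continuous a)
    (key : ∀ x ∈ s, a x = c → f' x = g' x) :
    ContinuousOn (fun x => if a x ≤ c then f' x else g' x) s := by
  rw [continuousOn_iff_continuous_restrict] at hf hg ⊢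
  exact hf.if_le hg (ha.comp continuous_subtype_val) continuous_const
    fun x hx => key x x.2 hx


private lemma strip_lift {Z : Type*} [TopologicalSpace Z] (hq : IsCoveringMap q)
    {H : Z × I → B} (hH : Continuous H) (z₀ : Z) (e₀ : E) (he₀ : q e₀ = H (z₀, 0)) :
    ∃ N : Set Z, IsOpen N ∧ z₀ ∈ N ∧ ∃ L : Z × I → E,
      ContinuousOn L (N ×ˢ (Set.univ : Set I)) ∧ L (z₀, 0) = e₀ ∧
      ∀ z ∈ N, ∀ τ : I, q (L (z, τ)) = H (z, τ) := by
  classical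
  set A : Set ℝ := {s | 0 ≤ s ∧ s ≤ 1 ∧ ∃ N : Set Z, IsOpen N ∧ z₀ ∈ N ∧
    ∃ L : Z × I → E, ContinuousOn L (N ×ˢ (Set.univ : Set I)) ∧ L (z₀, 0) = e₀ ∧
      ∀ z ∈ N, ∀ τ : I, (τ : ℝ) ≤ s → q (L (z, τ)) = H (z, τ)} with hA
  -- base case : 0 ∈ A
  have hbase : (0 : ℝ) ∈ A := by
    haveI : Nonempty (q ⁻¹' {H (z₀, 0)}) := ⟨⟨e₀, he₀⟩⟩
    obtain ⟨U, F, _, ψ, ι, hUo, hbU, hψc, hιc, hψq, hψι⟩ := local_sheet hq (H (z₀, 0))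
    refine ⟨le_refl 0, zero_le_one, (fun z => H (z, 0)) ⁻¹' U,
      hUo.preimage (hH.comp (continuous_id.prodMk continuous_const)), hbU,
      fun p => ψ (H (p.1, 0), ι e₀), ?_, by simpa [he₀] using hψι e₀ (he₀ ▸ hbU), ?_⟩
    · refine hψc.comp (Continuous.continuousOn (by fun_prop)) ?_
      intro p hp
      exact ⟨hp.1, trivial⟩
    · intro z hz τ hτ
      have hτ0 : τ = 0 := Subtype.ext (le_antisymm hτ τ.2.1)
      rw [hτ0]
      exact hψq _ hz
  have hbdd : BddAbove A := ⟨1, fun s hs => hs.2.1⟩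
  have hne : A.Nonempty := ⟨0, hbase⟩
  set s' : ℝ := sSup A with hs'
  have hs'0 : 0 ≤ s' := le_csSup hbdd hbase
  have hs'1 : s' ≤ 1 := csSup_le hne fun s hs => hs.2.1
  -- main claim : 1 ∈ A
  have hone : (1 : ℝ) ∈ A := by
    set st : I := ⟨s', hs'0, hs'1⟩ with hst
    haveI : Nonempty (q ⁻¹' {H (z₀, st)}) := by
      apply fiber_nonempty hq
      intro W hWo hW
      obtain ⟨ε, hε, hball⟩ :=
        Metric.isOpen_iff.1 (hWo.preimage (hH.comp (Continuous.prodMk_right z₀))) st hW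
      obtain ⟨s, hsA, hs_gt⟩ := exists_lt_of_lt_csSup hne (by linarith : s' - ε < s')
      have hs_le : s ≤ s' := le_csSup hbdd hsA
      obtain ⟨hs0, hs1, N, -, hz₀N, L, -, -, hLq⟩ := hsA
      refine ⟨L (z₀, ⟨s, hs0, hs1⟩), ?_⟩
      rw [hLq z₀ hz₀N ⟨s, hs0, hs1⟩ le_rfl]
      have hmemb : (⟨s, hs0, hs1⟩ : I) ∈ Metric.ball st ε := by
        rw [Metric.mem_ball, Subtype.dist_eq, Real.dist_eq]
        show |s - s'| < ε
        rw [abs_lt]; constructor <;> linarith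
      exact hball hmemb
    obtain ⟨U, F, _, ψ, ι, hUo, hbU, hψc, hιc, hψq, hψι⟩ := local_sheet hq (H (z₀, st))
    -- find a product neighborhood of (z₀, st) inside H ⁻¹' U
    obtain ⟨u, v, hu, hv, hz₀u, hstv, huv⟩ :=
      isOpen_prod_iff.1 (hUo.preimage hH) z₀ st hbU
    obtain ⟨ε, hε, hball⟩ := Metric.isOpen_iff.1 hv st hstv
    have hmem : ∀ z ∈ u, ∀ τ : I, |(τ : ℝ) - s'| < ε → H (z, τ) ∈ U := by
      intro z hz τ hτ
      refine huv ⟨hz, hball ?_⟩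
      rw [Metric.mem_ball, Subtype.dist_eq, Real.dist_eq]
      exact hτ
    -- choose s ∈ A with s' - ε/2 < s
    obtain ⟨s, hsA, hs_gt⟩ := exists_lt_of_lt_csSup hne (by linarith : s' - ε/2 < s')
    have hs_le : s ≤ s' := le_csSup hbdd hsA
    obtain ⟨hs0, hs1, N, hNo, hz₀N, L, hLc, hL0, hLq⟩ := hsA
    set uu : ℝ := min (s' + ε/2) 1 with huu
    have hsuu : s ≤ uu := le_min (by linarith) hs1
    have huu1 : uu ≤ 1 := min_le_right _ _
    have huu0 : 0 ≤ uu := le_trans hs0 hsuu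
    set sI : I := ⟨s, hs0, hs1⟩ with hsI
    -- the clamping map
    have hclamp : ∀ τ : I, max (min (τ : ℝ) uu) s ∈ Set.Icc (0:ℝ) 1 :=
      fun τ => ⟨le_trans hs0 (le_max_right _ _),
        max_le (le_trans (min_le_right _ _) huu1) hs1⟩
    set clamp : I → I := fun τ => ⟨max (min (τ : ℝ) uu) s, hclamp τ⟩ with hclampdef
    have hclamp_cont : Continuous clamp := by
      apply Continuous.subtype_mk
      fun_prop
    have hclamp_range : ∀ τ : I, |(clamp τ : ℝ) - s'| < ε := by
      intro τ
      have h1 : s ≤ (clamp τ : ℝ) := le_max_right _ _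
      have h2 : (clamp τ : ℝ) ≤ uu :=
        max_le (min_le_right _ _) hsuu
      have : uu ≤ s' + ε/2 := min_le_left _ _
      rw [abs_lt]; constructor <;> linarith
    have hsmem : |(sI : ℝ) - s'| < ε := by
      simp only [hsI]
      rw [abs_lt]; constructor <;> linarith
    set N₂ : Set Z := N ∩ u with hN₂
    have hN₂o : IsOpen N₂ := hNo.inter hu
    have hz₀N₂ : z₀ ∈ N₂ := ⟨hz₀N, hz₀u⟩
    -- L at level s lands in q ⁻¹' U over N₂
    have hLsU : ∀ z ∈ N₂, q (L (z, sI)) ∈ U := by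
      intro z hz
      rw [hLq z hz.1 sI le_rfl]
      exact hmem z hz.2 sI hsmem
    have hLs_cont : ContinuousOn (fun z => L (z, sI)) N₂ := by
      have h1 : ContinuousOn L (N₂ ×ˢ (Set.univ : Set I)) :=
        hLc.mono (Set.prod_mono Set.inter_subset_left le_rfl)
      exact h1.comp (Continuous.continuousOn (by fun_prop))
        (fun z hz => ⟨hz, trivial⟩)
    classical
    set L' : Z × I → E := fun p =>
      if (p.2 : ℝ) ≤ s then L p else ψ (H (p.1, clamp p.2), ι (L (p.1, sI))) with hL'
    have huuA : uu ∈ A := by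
      refine ⟨huu0, huu1, N₂, hN₂o, hz₀N₂, L', ?_, ?_, ?_⟩
      · -- continuity
        apply continuousOn_if_le' (a := fun p : Z × I => ((p.2 : ℝ)))
        · exact hLc.mono (Set.prod_mono Set.inter_subset_left le_rfl)
        · -- second branch
          refine hψc.comp ?_ ?_
          · apply ContinuousOn.prodMk
            · exact (hH.comp (continuous_fst.prodMk
                (hclamp_cont.comp continuous_snd))).continuousOn
            · refine hιc.comp (hLs_cont.comp continuous_fst.continuousOn ?_) ?_
              · intro p hp; exact hp.1
              · intro p hp; exact hLsU p.1 hp.1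
          · intro p hp
            exact ⟨hmem p.1 hp.1.2 (clamp p.2) (hclamp_range p.2), trivial⟩
        · fun_prop
        · -- junction
          rintro ⟨z, τ⟩ hp (hτs : (τ : ℝ) = s)
          have hτ : τ = sI := Subtype.ext hτs
          subst hτ
          have h1 : clamp sI = sI := by
            apply Subtype.ext
            show min (s : ℝ) uu ⊔ s = s
            rw [min_eq_left hsuu, max_self]
          show L (z, sI) = ψ (H (z, clamp sI), ι (L (z, sI)))
          rw [h1]
          have h2 : H (z, sI) = q (L (z, sI)) := (hLq z hp.1.1 sI le_rfl).symm
          rw [h2, hψι _ (hLsU z hp.1)]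
      · -- value at (z₀, 0)
        show (if ((0 : I) : ℝ) ≤ s then L (z₀, 0) else _) = e₀
        rw [if_pos (by exact_mod_cast hs0 : ((0 : I) : ℝ) ≤ s)]
        exact hL0
      · -- lifting property up to uu
        rintro z hz τ hτ
        by_cases hcase : (τ : ℝ) ≤ s
        · show q (if (τ : ℝ) ≤ s then L (z, τ) else _) = H (z, τ)
          rw [if_pos hcase]
          exact hLq z hz.1 τ hcase
        · show q (if (τ : ℝ) ≤ s then L (z, τ) else _) = H (z, τ)
          rw [if_neg hcase]
          push_neg at hcase
          have h1 : clamp τ = τ := by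
            apply Subtype.ext
            show min (τ : ℝ) uu ⊔ s = τ
            rw [min_eq_left hτ, max_eq_left hcase.le]
          rw [h1]
          exact hψq _ (hmem z hz.2 τ (h1 ▸ hclamp_range τ))
    -- conclude : s' = 1 and 1 ∈ A
    have huus : uu ≤ s' := le_csSup hbdd huuA
    have hs'eq : s' = 1 := by
      by_contra h
      have hlt : s' < 1 := lt_of_le_of_ne hs'1 h
      have : s' < uu := lt_min (by linarith) hlt
      linarith
    have huueq : uu = 1 := by
      rw [huu, hs'eq]
      exact min_eq_right (by linarith)
    exact huueq ▸ huuA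
  obtain ⟨-, -, N, hNo, hz₀N, L, hLc, hL0, hLq⟩ := hone
  exact ⟨N, hNo, hz₀N, L, hLc, hL0, fun z hz τ => hLq z hz τ τ.2.2⟩


/-- Uniqueness of path lifts. -/
private lemma path_lift_unique_s1 {E B : Type*} [TopologicalSpace E] [TopologicalSpace B]
    {q : E → B} (hq : IsCoveringMap q) {Γ₁ Γ₂ : I → E}
    (h₁ : Continuous Γ₁) (h₂ : Continuous Γ₂) (h : ∀ τ, q (Γ₁ τ) = q (Γ₂ τ))
    (h0 : Γ₁ 0 = Γ₂ 0) : Γ₁ = Γ₂ :=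
  hq.eq_of_comp_eq h₁ h₂ (funext h) 0 h0

/-- Existence of path lifts. -/
private lemma path_lift {E : Type uE} {B : Type*} [TopologicalSpace E] [TopologicalSpace B]
    {q : E → B} (hq : IsCoveringMap q) {γ : I → B} (hγ : Continuous γ)
    (e₀ : E) (he₀ : q e₀ = γ 0) :
    ∃ Γ : I → E, Continuous Γ ∧ Γ 0 = e₀ ∧ ∀ τ, q (Γ τ) = γ τ := by
  obtain ⟨N, hNo, hmem, L, hLc, hL0, hLq⟩ :=
    strip_lift (Z := Unit) hq (H := fun p => γ p.2)
      (hγ.comp continuous_snd) () e₀ he₀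
  exact ⟨fun τ => L ((), τ),
    hLc.comp_continuous (by fun_prop) (fun τ => ⟨hmem, trivial⟩),
    hL0, fun τ => hLq () hmem τ⟩

/-- Homotopy lifting. -/
private lemma homotopy_lift {E : Type uE} {B : Type*} [TopologicalSpace E] [TopologicalSpace B]
    {q : E → B} {Z : Type*} [TopologicalSpace Z] (hq : IsCoveringMap q)
    {H : Z × I → B} (hH : Continuous H) {L₀ : Z → E} (hL₀ : Continuous L₀)
    (hlift : ∀ z, q (L₀ z) = H (z, 0)) :
    ∃ K : Z × I → E, Continuous K ∧ (∀ z, K (z, 0) = L₀ z) ∧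
      ∀ p : Z × I, q (K p) = H p := by
  classical
  have hfib : ∀ z : Z, ∃ Γ : I → E, Continuous Γ ∧ Γ 0 = L₀ z ∧
      ∀ τ, q (Γ τ) = H (z, τ) := fun z =>
    path_lift hq (hH.comp (Continuous.prodMk_right z)) (L₀ z) (hlift z)
  choose Γ hΓc hΓ0 hΓq using hfib
  refine ⟨fun p => Γ p.1 p.2, ?_, fun z => hΓ0 z, fun p => hΓq p.1 p.2⟩
  rw [continuous_iff_continuousAt]
  rintro ⟨z₁, τ₁⟩
  obtain ⟨N, hNo, hz₁N, L, hLc, hL0, hLq⟩ :=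
    strip_lift hq hH z₁ (L₀ z₁) (hlift z₁)
  obtain ⟨φ, hφs, hφeq⟩ := hq.isLocalHomeomorph (L₀ z₁)
  have hbotc : ContinuousOn (fun z => L (z, 0)) N :=
    (hLc.mono le_rfl).comp (Continuous.continuousOn (by fun_prop))
      (fun z hz => ⟨hz, trivial⟩)
  set N' : Set Z := (N ∩ (fun z => L (z, 0)) ⁻¹' φ.source) ∩ L₀ ⁻¹' φ.source
    with hN'
  have hN'o : IsOpen N' :=
    (hbotc.isOpen_inter_preimage hNo φ.open_source).inter
      (φ.open_source.preimage hL₀)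
  have hz₁N' : z₁ ∈ N' := ⟨⟨hz₁N, by simp [hL0, hφs]⟩, hφs⟩
  have hbot : ∀ z ∈ N', L (z, 0) = L₀ z := by
    intro z hz
    have h1 : L (z, 0) ∈ φ.source := hz.1.2
    have h2 : L₀ z ∈ φ.source := hz.2
    apply φ.injOn h1 h2
    rw [← hφeq, hLq z hz.1.1 0, hlift z]
  have hagree : ∀ z ∈ N', ∀ τ : I, Γ z τ = L (z, τ) := by
    intro z hz τ
    have hLzc : Continuous fun τ : I => L (z, τ) :=
      hLc.comp_continuous (by fun_prop) (fun τ => ⟨hz.1.1, trivial⟩)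
    have := path_lift_unique_s1 hq (hΓc z) hLzc
      (fun τ => by rw [hΓq z τ]; exact (hLq z hz.1.1 τ).symm)
      (by rw [hΓ0 z]; exact (hbot z hz).symm)
    exact congrFun this τ
  have : ContinuousOn (fun p : Z × I => Γ p.1 p.2) (N' ×ˢ (Set.univ : Set I)) := by
    refine ContinuousOn.congr (hLc.mono (Set.prod_mono ?_ le_rfl)) ?_
    · exact fun z hz => hz.1.1
    · rintro ⟨z, τ⟩ hp
      exact hagree z hp.1 τ
  exact this.continuousAt (prod_mem_nhds (hN'o.mem_nhds hz₁N') Filter.univ_mem)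


/-- Homotopic paths lift (from the same starting point) to paths with the same endpoint. -/
private lemma homotopic_lift_endpoint (hq : IsCoveringMap q) {b₀ b₁ : B}
    {γ₀ γ₁ : Path b₀ b₁} (hhom : γ₀.Homotopic γ₁) {e₀ : E} {Γ₀ Γ₁ : I → E}
    (hc0 : Continuous Γ₀) (hc1 : Continuous Γ₁)
    (h00 : Γ₀ 0 = e₀) (h10 : Γ₁ 0 = e₀)
    (hl0 : ∀ τ, q (Γ₀ τ) = γ₀ τ) (hl1 : ∀ τ, q (Γ₁ τ) = γ₁ τ) :
    Γ₀ 1 = Γ₁ 1 := by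
  obtain ⟨F⟩ := hhom
  set H : I × I → B := fun p => F (p.2, p.1) with hHdef
  have hH : Continuous H := F.continuous.comp (continuous_snd.prodMk continuous_fst)
  obtain ⟨K, hKc, hK0, hKq⟩ := homotopy_lift hq hH hc0
    (fun x => by rw [hl0 x]; exact (F.apply_zero x).symm)
  have hmem0 : (0 : I) ∈ ({0, 1} : Set I) := by simp
  have hmem1 : (1 : I) ∈ ({0, 1} : Set I) := by simp
  have hK0c : Continuous fun t : I => K (0, t) := by fun_prop
  have hK1c : Continuous fun t : I => K (1, t) := by fun_prop
  have hKtopc : Continuous fun x : I => K (x, 1) := by fun_prop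
  have hside0 : ∀ t : I, K (0, t) = Γ₀ 0 := by
    intro t
    have := path_lift_unique_s1 hq hK0c continuous_const
      (fun t => by
        rw [hKq (0, t)]
        show F (t, 0) = q (Γ₀ 0)
        rw [F.eq_fst t hmem0, hl0 0]; rfl)
      (hK0 0)
    exact congrFun this t
  have hside1 : ∀ t : I, K (1, t) = Γ₀ 1 := by
    intro t
    have := path_lift_unique_s1 hq hK1c continuous_const
      (fun t => by
        rw [hKq (1, t)]
        show F (t, 1) = q (Γ₀ 1)
        rw [F.eq_fst t hmem1, hl0 1]; rfl)
      (hK0 1)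
    exact congrFun this t
  have htop : (fun x => K (x, 1)) = Γ₁ := by
    apply path_lift_unique_s1 hq hKtopc hc1
    · intro x
      rw [hKq (x, 1), hl1 x]
      show F (1, x) = γ₁ x
      rw [F.apply_one]; rfl
    · show K (0, 1) = Γ₁ 0
      rw [hside0 1, h00, h10]
  calc Γ₀ 1 = K (1, 1) := (hside1 1).symm
    _ = Γ₁ 1 := congrFun htop 1

/-- The lifting criterion for maps from a simply connected, locally path connected space. -/
private lemma lifting_criterion {Z : Type*} [TopologicalSpace Z] [PathConnectedSpace Z]
    [SimplyConnectedSpace Z] [LocallyPathConnectedSpace Z]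
    (hq : IsCoveringMap q) {g : Z → B} (hg : Continuous g) (z₀ : Z) (e₀ : E)
    (he₀ : q e₀ = g z₀) :
    ∃ G : Z → E, Continuous G ∧ G z₀ = e₀ ∧ ∀ z, q (G z) = g z := by
  classical
  have hlifts : ∀ z : Z, ∃ Γ : I → E, Continuous Γ ∧ Γ 0 = e₀ ∧
      ∀ τ, q (Γ τ) = g (PathConnectedSpace.somePath z₀ z τ) := by
    intro z
    refine path_lift hq (hg.comp (PathConnectedSpace.somePath z₀ z).continuous) e₀ ?_
    rw [he₀]
    show g z₀ = g ((PathConnectedSpace.somePath z₀ z) 0)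
    rw [Path.source]
  choose Λ hΛc hΛ0 hΛq using hlifts
  set G : Z → E := fun z => Λ z 1 with hGdef
  have key : ∀ (z : Z) (γ : Path z₀ z) (Γ : I → E), Continuous Γ → Γ 0 = e₀ →
      (∀ τ, q (Γ τ) = g (γ τ)) → Γ 1 = G z := by
    intro z γ Γ hΓc hΓ0 hΓq
    have hhom : (γ.map hg).Homotopic ((PathConnectedSpace.somePath z₀ z).map hg) :=
      Path.Homotopic.map
        (SimplyConnectedSpace.paths_homotopic γ (PathConnectedSpace.somePath z₀ z))
        ⟨g, hg⟩
    exact homotopic_lift_endpoint hq hhom hΓc (hΛc z) hΓ0 (hΛ0 z)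
      (fun τ => by rw [hΓq τ]; rfl) (fun τ => by rw [hΛq z τ]; rfl)
  have hGq : ∀ z, q (G z) = g z := by
    intro z
    rw [hGdef]
    show q (Λ z 1) = g z
    rw [hΛq z 1]
    show g ((PathConnectedSpace.somePath z₀ z) 1) = g z
    rw [Path.target]
  have hG0 : G z₀ = e₀ := by
    have := key z₀ (Path.refl z₀) (fun _ => e₀) continuous_const rfl
      (fun τ => by rw [he₀]; simp)
    exact this.symm
  refine ⟨G, ?_, hG0, hGq⟩
  rw [continuous_iff_continuousAt]
  intro zb
  haveI : Nonempty (q ⁻¹' {g zb}) := ⟨⟨G zb, hGq zb⟩⟩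
  obtain ⟨U, F, _, ψ, ι, hUo, hbU, hψc, hιc, hψq, hψι⟩ := local_sheet hq (g zb)
  set i : F := ι (G zb) with hidef
  have hWnhds : g ⁻¹' U ∈ nhds zb := (hUo.preimage hg).mem_nhds hbU
  obtain ⟨V, ⟨hVnhds, hVpc⟩, hVsub⟩ :=
    (LocPathConnectedSpace.path_connected_basis zb).mem_iff.1 hWnhds
  have hGzb_src : q (G zb) ∈ U := by rw [hGq zb]; exact hbU
  have hclaim : ∀ z ∈ V, G z = ψ (g z, i) := by
    intro z hz
    obtain ⟨δ, δmem⟩ := (hVpc.joinedIn zb (mem_of_mem_nhds hVnhds) z hz)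
    set Γ₂ : I → E := fun τ => ψ (g (δ τ), i) with hΓ₂def
    have hΓ₂q : ∀ τ, q (Γ₂ τ) = g (δ τ) := fun τ => hψq _ (hVsub (δmem τ))
    have hΓ₂0 : Γ₂ 0 = G zb := by
      show ψ (g (δ 0), i) = G zb
      rw [δ.source, ← hGq zb]
      exact hψι _ hGzb_src
    have hΓ₂1 : Γ₂ 1 = ψ (g z, i) := by show ψ (g (δ 1), i) = _; rw [δ.target]
    have hΓ₂c : Continuous Γ₂ :=
      hψc.comp_continuous ((hg.comp δ.continuous).prodMk continuous_const)
        (fun τ => ⟨hVsub (δmem τ), trivial⟩)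
    set ΛP : Path e₀ (G zb) :=
      { toFun := Λ zb, continuous_toFun := hΛc zb, source' := hΛ0 zb, target' := rfl }
    set Γ₂P : Path (G zb) (ψ (g z, i)) :=
      { toFun := Γ₂, continuous_toFun := hΓ₂c, source' := hΓ₂0, target' := hΓ₂1 }
    have h1 := key z ((PathConnectedSpace.somePath z₀ zb).trans δ) (ΛP.trans Γ₂P)
      (ΛP.trans Γ₂P).continuous (ΛP.trans Γ₂P).source ?_
    · rw [← h1, Path.target]
    · intro τ
      rw [Path.trans_apply, Path.trans_apply]
      split_ifs with h
      · exact hΛq zb _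
      · exact hΓ₂q _
  have hcont : ContinuousOn (fun z => ψ (g z, i)) (g ⁻¹' U) := by
    refine hψc.comp ((hg.continuousOn).prodMk continuousOn_const) ?_
    intro z hz
    exact ⟨hz, trivial⟩
  exact ((hcont.continuousAt hWnhds).congr
    (Filter.eventuallyEq_of_mem hVnhds fun z hz => (hclaim z hz).symm))

end Lifting

/-- The map `h ↦ h ∘ f0` is a bijection from the group of deck transformations of `q`
onto the set of all liftings of `f`. -/
theorem stmt_1 {X Y XT YT : Type*} [TopologicalSpace X] [TopologicalSpace Y]
    [TopologicalSpace XT] [TopologicalSpace YT]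
    [PathConnectedSpace X] [PathConnectedSpace Y]
    [LocallyPathConnectedSpace X] [LocallyPathConnectedSpace Y]
    [SimplyConnectedSpace XT] [SimplyConnectedSpace YT]
    [LocallyPathConnectedSpace XT] [LocallyPathConnectedSpace YT]
    (p : XT → X) (q : YT → Y) (hp : IsCoveringMap p) (hq : IsCoveringMap q)
    (f : X → Y) (hf : Continuous f)
    (f0 : XT → YT) (hf0 : IsLift p q f f0) :
    Function.Injective (fun h : {h : YT ≃ₜ YT // IsDeck q h} => (⇑h.1 ∘ f0 : XT → YT)) ∧
      Set.range (fun h : {h : YT ≃ₜ YT // IsDeck q h} => (⇑h.1 ∘ f0 : XT → YT)) =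
        {ft : XT → YT | IsLift p q f ft} := by
  obtain ⟨hf0c, hf0q⟩ := hf0
  obtain ⟨x₀⟩ : Nonempty XT := inferInstance
  constructor
  · intro h₁ h₂ heq
    have hpt : h₁.1 (f0 x₀) = h₂.1 (f0 x₀) := congrFun heq x₀
    have hfn := hq.eq_of_comp_eq (g₁ := ⇑h₁.1) (g₂ := ⇑h₂.1)
      h₁.1.continuous h₂.1.continuous
      (funext fun y => (h₁.2 y).trans (h₂.2 y).symm) (f0 x₀) hpt
    exact Subtype.ext (Homeomorph.ext fun y => congrFun hfn y)
  · ext ft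
    constructor
    · rintro ⟨h, rfl⟩
      exact ⟨h.1.continuous.comp hf0c, fun x => (h.2 (f0 x)).trans (hf0q x)⟩
    · rintro ⟨hftc, hftq⟩
      have hqy : q (ft x₀) = q (f0 x₀) := (hftq x₀).trans (hf0q x₀).symm
      obtain ⟨h, hhc, hh0, hhq⟩ :=
        lifting_criterion hq hq.continuous (f0 x₀) (ft x₀) hqy
      obtain ⟨h', hh'c, hh'0, hh'q⟩ :=
        lifting_criterion hq hq.continuous (ft x₀) (f0 x₀) hqy.symm
      have hright : h ∘ h' = id :=
        hq.eq_of_comp_eq (hhc.comp hh'c) continuous_id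
          (funext fun y => by simp [Function.comp, hhq, hh'q]) (ft x₀)
          (by simp [Function.comp, hh'0, hh0])
      have hleft : h' ∘ h = id :=
        hq.eq_of_comp_eq (hh'c.comp hhc) continuous_id
          (funext fun y => by simp [Function.comp, hhq, hh'q]) (f0 x₀)
          (by simp [Function.comp, hh0, hh'0])
      set hom : YT ≃ₜ YT :=
        { toFun := h, invFun := h',
          left_inv := fun y => congrFun hleft y,
          right_inv := fun y => congrFun hright y,
          continuous_toFun := hhc, continuous_invFun := hh'c } with homdef
      refine ⟨⟨hom, fun y => hhq y⟩, ?_⟩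
      show (⇑hom ∘ f0 : XT → YT) = ft
      refine hq.eq_of_comp_eq (hhc.comp hf0c) hftc
        (funext fun x => ?_) x₀ (by simp [homdef, hh0])
      show q (h (f0 x)) = q (ft x)
      rw [hhq, hf0q, hftq]
end

section
/- Let p : X̃ → X and q : Ỹ → Y be universal covering maps, f : X → Y continuous, f̃₀ a fixed lifting of f, and f_* : D(X) → D(Y) the induced homomorphism of deck transformation groups. If h is a deck transformation of q for which there exists a fibre-preserving homotopy H̃ : X̃ × [0,1] → Ỹ with H̃₀ = f̃₀ and H̃₁ = h ∘ f̃₀, then h commutes with f_*(l) for every deck transformation l of p; that is, h lies in the centralizer of f_*(D(X)) in D(Y). -/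
open unitInterval

/-- If `h` is a deck transformation of `q` admitting a fibre-preserving homotopy from `f0`
to `h ∘ f0`, then `h` lies in the centralizer of `f_*(D(X))` in `D(Y)`. -/
theorem stmt_4 {X Y XT YT : Type*} [TopologicalSpace X] [TopologicalSpace Y]
    [TopologicalSpace XT] [TopologicalSpace YT]
    [PathConnectedSpace X] [PathConnectedSpace Y]
    [LocallyPathConnectedSpace X] [LocallyPathConnectedSpace Y]
    [SimplyConnectedSpace XT] [SimplyConnectedSpace YT]
    [LocallyPathConnectedSpace XT] [LocallyPathConnectedSpace YT]
    (p : XT → X) (q : YT → Y) (hp : IsCoveringMap p) (hq : IsCoveringMap q)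
    (f : X → Y) (hf : Continuous f)
    (f0 : XT → YT) (hf0 : IsLift p q f f0)
    -- the induced homomorphism `f_*` on deck transformation groups:
    (fstar : (XT ≃ₜ XT) → (YT ≃ₜ YT))
    (hfstar : ∀ l : XT ≃ₜ XT, IsDeck p l →
      IsDeck q (fstar l) ∧ ∀ x, f0 (l x) = fstar l (f0 x))
    (h : YT ≃ₜ YT) (hh : IsDeck q h)
    (HT : C(XT × I, YT)) (hfib : IsFPHomotopy p q HT)
    (hHT0 : ∀ x, HT (x, 0) = f0 x) (hHT1 : ∀ x, HT (x, 1) = h (f0 x)) :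
    ∀ l : XT ≃ₜ XT, IsDeck p l → ∀ y, h (fstar l y) = fstar l (h y) := by
  intro l hl
  obtain ⟨hdeck, hcomm⟩ := hfstar l hl
  obtain ⟨x₀⟩ : Nonempty XT := inferInstance
  -- key pointwise identity at f0 x₀ via uniqueness of path lifting
  have key : h (f0 (l x₀)) = fstar l (h (f0 x₀)) := by
    have hc1 : Continuous fun t : I => HT (l x₀, t) :=
      HT.continuous.comp (continuous_const.prodMk continuous_id)
    have hc2 : Continuous fun t : I => fstar l (HT (x₀, t)) :=
      (fstar l).continuous.comp (HT.continuous.comp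
        (continuous_const.prodMk continuous_id))
    have heq : (fun t : I => HT (l x₀, t)) = fun t : I => fstar l (HT (x₀, t)) := by
      apply hq.eq_of_comp_eq hc1 hc2 _ 0
      · simp only [hHT0, hcomm]
      · funext t
        simp only [Function.comp]
        rw [hdeck]
        exact hfib (l x₀, t) (x₀, t) (hl x₀) rfl
    have := congrFun heq 1
    simpa only [hHT1] using this
  -- propagate to all y by uniqueness of lifts on connected YT
  have main : (fun y => h (fstar l y)) = fun y => fstar l (h y) := by
    apply hq.eq_of_comp_eq (h.continuous.comp (fstar l).continuous)
      ((fstar l).continuous.comp h.continuous) _ (f0 x₀)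
    · show h ((fstar l) (f0 x₀)) = (fstar l) (h (f0 x₀))
      rw [← hcomm]; exact key
    · funext y
      simp only [Function.comp]
      rw [hh, hdeck, hdeck, hh]
  exact fun y => congrFun main y
end

section
/- Let p : X̃ → X and q : Ỹ → Y be universal covering maps, f : X → Y continuous, and f̃₀ a fixed lifting of f. Define D^{f̃₀}(Y) as the set of deck transformations h of q admitting a fibre-preserving homotopy H̃ : X̃ × [0,1] → Ỹ with H̃₀ = f̃₀ and H̃₁ = h ∘ f̃₀. Then D^{f̃₀}(Y) is a subgroup of the deck transformation group of q: it contains the identity, and if h, h' ∈ D^{f̃₀}(Y) then h ∘ h'⁻¹ ∈ D^{f̃₀}(Y). -/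
open unitInterval

/-- Membership in `D^{f0}(Y)`: a deck transformation `h` of `q` admitting a fibre-preserving
homotopy `HT` with `HT_0 = f0` and `HT_1 = h ∘ f0`. -/
def MemDf {X Y XT YT : Type*} [TopologicalSpace X] [TopologicalSpace Y]
    [TopologicalSpace XT] [TopologicalSpace YT]
    (p : XT → X) (q : YT → Y) (f0 : XT → YT) (h : YT ≃ₜ YT) : Prop :=
  IsDeck q h ∧ ∃ HT : C(XT × I, YT), IsFPHomotopy p q HT ∧
    (∀ x, HT (x, 0) = f0 x) ∧ (∀ x, HT (x, 1) = h (f0 x))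

/-- `D^{f0}(Y)` is a subgroup of the deck transformation group of `q`: it contains the
identity, and together with `h, h'` it contains `h ∘ h'⁻¹`. -/
theorem stmt_5 {X Y XT YT : Type*} [TopologicalSpace X] [TopologicalSpace Y]
    [TopologicalSpace XT] [TopologicalSpace YT]
    [PathConnectedSpace X] [PathConnectedSpace Y]
    [LocallyPathConnectedSpace X] [LocallyPathConnectedSpace Y]
    [SimplyConnectedSpace XT] [SimplyConnectedSpace YT]
    [LocallyPathConnectedSpace XT] [LocallyPathConnectedSpace YT]
    (p : XT → X) (q : YT → Y) (hp : IsCoveringMap p) (hq : IsCoveringMap q)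
    (f : X → Y) (hf : Continuous f)
    (f0 : XT → YT) (hf0 : IsLift p q f f0) :
    MemDf p q f0 (Homeomorph.refl YT) ∧
      ∀ h h' : YT ≃ₜ YT, MemDf p q f0 h → MemDf p q f0 h' →
        MemDf p q f0 (h'.symm.trans h) := by
  obtain ⟨hf0c, hf0l⟩ := hf0
  constructor
  · refine ⟨fun e => rfl, ⟨⟨fun z => f0 z.1, hf0c.comp continuous_fst⟩, ?_,
      fun x => rfl, fun x => rfl⟩⟩
    intro z z' h1 _
    simp only [ContinuousMap.coe_mk]
    rw [hf0l, hf0l, h1]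
  · rintro h h' ⟨hd, H1, hFP1, h10, h11⟩ ⟨hd', H2, hFP2, h20, h21⟩
    have hdinv' : ∀ e, q (h'.symm e) = q e := fun e => by
      conv_rhs => rw [← h'.apply_symm_apply e]
      exact (hd' _).symm
    refine ⟨fun e => by rw [Homeomorph.trans_apply, hd, hdinv'], ?_⟩
    set F0 : C(XT, YT) := ⟨f0, hf0c⟩ with hF0
    let c : C(YT, YT) := ⟨fun y => h (h'.symm y),
      h.continuous.comp h'.symm.continuous⟩
    let hC : C(YT, YT) := ⟨h, h.continuous⟩
    let G1 : ContinuousMap.Homotopy F0 (hC.comp F0) :=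
      { toFun := fun z => H1 (z.2, z.1)
        continuous_toFun := H1.continuous.comp (continuous_snd.prodMk continuous_fst)
        map_zero_left := fun x => by simp only [hF0, ContinuousMap.coe_mk]; exact h10 x
        map_one_left := fun x => by
          simp only [hF0, hC, ContinuousMap.comp_apply, ContinuousMap.coe_mk]; exact h11 x }
    let G2 : ContinuousMap.Homotopy (c.comp F0) (hC.comp F0) :=
      { toFun := fun z => h (h'.symm (H2 (z.2, z.1)))
        continuous_toFun := h.continuous.comp (h'.symm.continuous.comp
          (H2.continuous.comp (continuous_snd.prodMk continuous_fst)))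
        map_zero_left := fun x => by simp [c, h20, hF0]
        map_one_left := fun x => by simp [c, h21, hF0, hC] }
    let K := G1.trans G2.symm
    have hFPG2s : ∀ (t : I) (x x' : XT), p x = p x' →
        q (G2.symm (t, x)) = q (G2.symm (t, x')) := by
      intro t x x' hpx
      show q (h (h'.symm (H2 (x, σ t)))) = q (h (h'.symm (H2 (x', σ t))))
      rw [hd, hd, hdinv', hdinv']
      exact hFP2 (x, σ t) (x', σ t) hpx rfl
    refine ⟨⟨fun z => K (z.2, z.1),
      K.continuous.comp (continuous_snd.prodMk continuous_fst)⟩, ?_, ?_, ?_⟩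
    · rintro ⟨x, t⟩ ⟨x', t'⟩ hpx htx
      have ht : t = t' := htx
      subst ht
      show q (K (t, x)) = q (K (t, x'))
      rw [ContinuousMap.Homotopy.trans_apply, ContinuousMap.Homotopy.trans_apply]
      split_ifs with hle
      · exact hFP1 (x, _) (x', _) hpx rfl
      · exact hFPG2s _ _ _ hpx
    · intro x
      have := K.map_zero_left x
      simpa [K, hF0] using this
    · intro x
      have := K.map_one_left x
      simpa [K, c, hF0, Homeomorph.trans_apply] using this
end

section
/- Let p : X̃ → X and q : Ỹ → Y be universal covering maps, f : X → Y continuous, x₀ ∈ X a base-point, x̃₀ ∈ p⁻¹(x₀), and f̃₀ a fixed lifting of f. Suppose a : [0,1] → Y is a loop at f(x₀) for which there exists a homotopy H : X × [0,1] → Y with H(·,0) = H(·,1) = f and H(x₀, t) = a(t) for all t. Let ã : [0,1] → Ỹ be the lift of a with ã(0) = f̃₀(x̃₀), and let h be the unique deck transformation of q with h(f̃₀(x̃₀)) = ã(1). Then there exists a fibre-preserving homotopy H̃ : X̃ × [0,1] → Ỹ with H̃₀ = f̃₀, H̃₁ = h ∘ f̃₀, and q ∘ H̃ = H ∘ (p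 × id). In particular h ∈ D^{f̃₀}(Y). -/
open unitInterval

section HomotopyLifting
open Set Topology

/-- Local homotopy lifting for covering maps: given `g : Z × ℝ → Y` continuous and an initial
lift `g0` of `g (·, 0)`, every `z : Z` has an open neighborhood `N` on which `g` can be lifted
on `N × [0,1]` extending `g0`. -/
theorem IsCoveringMap.exists_nbhd_lift {YT Y Z : Type*} [TopologicalSpace YT]
    [TopologicalSpace Y] [TopologicalSpace Z] {q : YT → Y} (hq : IsCoveringMap q)
    {g : Z × ℝ → Y} (hg : Continuous g) {g0 : Z → YT} (hg0 : Continuous g0)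
    (h0 : ∀ z, q (g0 z) = g (z, 0)) (z : Z) :
    ∃ N : Set Z, IsOpen N ∧ z ∈ N ∧ ∃ G : Z × ℝ → YT,
      ContinuousOn G (N ×ˢ Set.Icc (0:ℝ) 1) ∧
      (∀ w ∈ N ×ˢ Set.Icc (0:ℝ) 1, q (G w) = g w) ∧
      (∀ z' ∈ N, G (z', 0) = g0 z') := by
  classical
  set A : Set ℝ := {s | s ∈ Set.Icc (0:ℝ) 1 ∧ ∃ N : Set Z, IsOpen N ∧ z ∈ N ∧
      ∃ G : Z × ℝ → YT, ContinuousOn G (N ×ˢ Set.Icc (0:ℝ) s) ∧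
      (∀ w ∈ N ×ˢ Set.Icc (0:ℝ) s, q (G w) = g w) ∧
      (∀ z' ∈ N, G (z', 0) = g0 z')} with hA
  have h0A : (0:ℝ) ∈ A := by
    refine ⟨⟨le_refl 0, zero_le_one⟩, Set.univ, isOpen_univ, trivial,
      fun w => g0 w.1, (hg0.comp continuous_fst).continuousOn, ?_, fun z' _ => rfl⟩
    rintro ⟨z', t⟩ ⟨-, ht0, ht1⟩
    obtain rfl : t = (0:ℝ) := le_antisymm ht1 ht0
    exact h0 z'
  have Ane : A.Nonempty := ⟨0, h0A⟩
  have Abdd : BddAbove A := ⟨1, fun s hs => hs.1.2⟩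
  set s₀ : ℝ := sSup A with hs₀
  have hs₀0 : 0 ≤ s₀ := le_csSup Abdd h0A
  have hs₀1 : s₀ ≤ 1 := csSup_le Ane fun s hs => hs.1.2
  -- evenly covered neighborhood of `g (z, s₀)`
  have hne : Nonempty (q ⁻¹' {g (z, s₀)}) := by
    by_contra hem
    rw [not_nonempty_iff] at hem
    obtain ⟨-, U, hyU, hUo, -, He, -⟩ := hq (g (z, s₀))
    have hcont : Continuous fun t : ℝ => g (z, t) := hg.comp (Continuous.prodMk_right z)
    obtain ⟨δ, hδ, hδU⟩ := Metric.isOpen_iff.mp (hUo.preimage hcont) s₀ hyU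
    obtain ⟨s, hsA, hss⟩ := exists_lt_of_lt_csSup Ane (show s₀ - δ < s₀ by linarith)
    have hsle : s ≤ s₀ := le_csSup Abdd hsA
    obtain ⟨⟨hs0, hs1⟩, N, -, hzN, G, -, hGl, -⟩ := hsA
    have hU : g (z, s) ∈ U := hδU (by
      rw [Metric.mem_ball, Real.dist_eq, abs_lt]; constructor <;> linarith)
    have hq' : q (G (z, s)) ∈ U := by
      rw [hGl (z, s) (Set.mk_mem_prod hzN ⟨hs0, le_refl s⟩)]; exact hU
    exact hem.false ((He ⟨G (z, s), hq'⟩).2)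
  set T := (hq (g (z, s₀))).toTrivialization with hTdef
  have hbase : g (z, s₀) ∈ T.baseSet := (hq (g (z, s₀))).mem_toTrivialization_baseSet
  have hVopen : IsOpen (g ⁻¹' T.baseSet) := T.open_baseSet.preimage hg
  obtain ⟨N₁, W, hN₁o, hWo, hzN₁, hs₀W, hNW⟩ :=
    isOpen_prod_iff.mp hVopen z s₀ hbase
  obtain ⟨ε, hε, hball⟩ := Metric.isOpen_iff.mp hWo s₀ hs₀W
  have hin : ∀ z' ∈ N₁, ∀ t : ℝ, |t - s₀| < ε → g (z', t) ∈ T.baseSet := by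
    intro z' hz' t ht
    exact hNW (Set.mk_mem_prod hz' (hball (by simpa [Real.dist_eq] using ht)))
  -- pick `s ∈ A` close to the sup
  obtain ⟨s, hsA, hss⟩ := exists_lt_of_lt_csSup Ane (show s₀ - ε < s₀ by linarith)
  have hsle : s ≤ s₀ := le_csSup Abdd hsA
  obtain ⟨⟨hs0, hs1⟩, N, hNo, hzN, G, hGc, hGl, hG0⟩ := hsA
  set s₂ : ℝ := min (s₀ + ε / 2) 1 with hs₂def
  have hs₀s₂ : s₀ ≤ s₂ := le_min (by linarith) hs₀1
  have hss₂ : s ≤ s₂ := le_trans hsle hs₀s₂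
  have hs₂1 : s₂ ≤ 1 := min_le_right _ _
  have hs₂lt : s₂ < s₀ + ε := lt_of_le_of_lt (min_le_left _ _) (by linarith)
  have hmemb : ∀ z' ∈ N₁, ∀ t ∈ Set.Icc s s₂, g (z', t) ∈ T.baseSet := by
    intro z' hz' t ⟨hts, hts₂⟩
    refine hin z' hz' t (abs_lt.mpr ⟨by linarith, by linarith⟩)
  set N' : Set Z := N ∩ N₁ with hN'
  have hGsrc : ∀ z' ∈ N', G (z', s) ∈ T.source := by
    intro z' hz'
    rw [T.mem_source, hGl (z', s) (Set.mk_mem_prod hz'.1 ⟨hs0, le_refl s⟩)]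
    exact hmemb z' hz'.2 s ⟨le_refl s, hss₂⟩
  set B : Z × ℝ → YT := fun w => T.toPartialHomeomorph.symm (g w, (T (G (w.1, s))).2) with hB
  set G' : Z × ℝ → YT := fun w => if w.2 ≤ s then G w else B w with hG'
  have hmatch : ∀ z' ∈ N', B (z', s) = G (z', s) := by
    intro z' hz'
    have h1 : q (G (z', s)) = g (z', s) := hGl _ (Set.mk_mem_prod hz'.1 ⟨hs0, le_refl s⟩)
    have := T.symm_apply_mk_proj (hGsrc z' hz')
    simpa [hB, h1] using this
  have hBc : ContinuousOn B (N' ×ˢ Set.Icc s s₂) := by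
    have hGs : ContinuousOn (fun w : Z × ℝ => G (w.1, s)) (N' ×ˢ Set.Icc s s₂) := by
      refine hGc.comp (continuous_fst.prodMk continuous_const).continuousOn ?_
      rintro ⟨z', t⟩ ⟨hz', -⟩
      exact Set.mk_mem_prod hz'.1 ⟨hs0, le_refl s⟩
    have hTc : ContinuousOn (fun w : Z × ℝ => (T (G (w.1, s))).2) (N' ×ˢ Set.Icc s s₂) := by
      refine continuous_snd.comp_continuousOn ?_
      refine T.toPartialHomeomorph.continuousOn.comp hGs ?_
      rintro ⟨z', t⟩ ⟨hz', -⟩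
      exact hGsrc z' hz'
    refine T.toPartialHomeomorph.symm.continuousOn.comp
      (hg.continuousOn.prodMk hTc) ?_
    rintro ⟨z', t⟩ ⟨hz', ht⟩
    rw [T.toPartialHomeomorph.symm_source, T.target_eq]
    exact ⟨hmemb z' hz'.2 t ht, trivial⟩
  have hG'c : ContinuousOn G' (N' ×ˢ Set.Icc 0 s₂) := by
    refine ContinuousOn.if ?_ ?_ ?_
    · rintro ⟨z', t⟩ ⟨hmem, hfr⟩
      have hts : t = s := frontier_le_subset_eq continuous_snd continuous_const hfr
      subst hts
      exact (hmatch z' hmem.1).symm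
    · have hsubset : (N' ×ˢ Set.Icc 0 s₂) ∩ closure {w : Z × ℝ | w.2 ≤ s}
          ⊆ N ×ˢ Set.Icc 0 s := by
        rintro ⟨z', t⟩ ⟨⟨hz', ht0, -⟩, hcl⟩
        have : t ≤ s := by
          have := (isClosed_le continuous_snd continuous_const).closure_subset hcl
          exact this
        exact Set.mk_mem_prod hz'.1 ⟨ht0, this⟩
      exact hGc.mono hsubset
    · have hsubset : (N' ×ˢ Set.Icc 0 s₂) ∩ closure {w : Z × ℝ | ¬ w.2 ≤ s}
          ⊆ N' ×ˢ Set.Icc s s₂ := by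
        rintro ⟨z', t⟩ ⟨⟨hz', -, hts₂⟩, hcl⟩
        have hst : s ≤ t := by
          have hsub : closure {w : Z × ℝ | ¬ w.2 ≤ s} ⊆ {w : Z × ℝ | s ≤ w.2} := by
            refine closure_minimal ?_ (isClosed_le continuous_const continuous_snd)
            intro w hw
            exact le_of_lt (not_le.mp hw)
          exact hsub hcl
        exact Set.mk_mem_prod hz' ⟨hst, hts₂⟩
      exact hBc.mono hsubset
  have hG'l : ∀ w ∈ N' ×ˢ Set.Icc (0:ℝ) s₂, q (G' w) = g w := by
    rintro ⟨z', t⟩ ⟨hz', ht0, hts₂⟩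
    by_cases hts : t ≤ s
    · simp only [hG', if_pos hts]
      exact hGl _ (Set.mk_mem_prod hz'.1 ⟨ht0, hts⟩)
    · simp only [hG', if_neg hts]
      exact T.proj_symm_apply' (hmemb z' hz'.2 t ⟨le_of_lt (not_le.mp hts), hts₂⟩)
  have hs₂A : s₂ ∈ A := by
    refine ⟨⟨le_trans hs0 hss₂, hs₂1⟩, N', hNo.inter hN₁o, ⟨hzN, hzN₁⟩, G', hG'c, hG'l, ?_⟩
    intro z' hz'
    simp only [hG', if_pos hs0]
    exact hG0 z' hz'.1
  have hs₂le : s₂ ≤ s₀ := le_csSup Abdd hs₂A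
  have hs₀eq : s₀ = 1 := by
    by_contra hne
    have h1 : s₀ < 1 := lt_of_le_of_ne hs₀1 hne
    have : s₀ < s₂ := lt_min (by linarith) h1
    linarith
  have h1A : (1:ℝ) ∈ A := by
    have : s₂ = 1 := by
      rw [hs₂def, hs₀eq]
      exact min_eq_right (by linarith)
    rwa [this] at hs₂A
  obtain ⟨-, N, hNo, hzN, G, hGc, hGl, hG0⟩ := h1A
  exact ⟨N, hNo, hzN, G, hGc, hGl, hG0⟩

end HomotopyLifting

/-- If a loop `a` at `f x₀` extends to a homotopy `H` from `f` to `f` (i.e. represents an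
element of the generalized Gottlieb group), and `h` is the deck transformation of `q` sending
`f0 x̃₀` to the endpoint of the lift `ã` of `a` starting at `f0 x̃₀`, then there is a
fibre-preserving homotopy `HT` with `HT_0 = f0`, `HT_1 = h ∘ f0` and `q ∘ HT = H ∘ (p × id)`;
in particular `h ∈ D^{f0}(Y)`. -/
theorem stmt_6 {X Y XT YT : Type*} [TopologicalSpace X] [TopologicalSpace Y]
    [TopologicalSpace XT] [TopologicalSpace YT]
    [PathConnectedSpace X] [PathConnectedSpace Y]
    [LocallyPathConnectedSpace X] [LocallyPathConnectedSpace Y]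
    [SimplyConnectedSpace XT] [SimplyConnectedSpace YT]
    [LocallyPathConnectedSpace XT] [LocallyPathConnectedSpace YT]
    (p : XT → X) (q : YT → Y) (hp : IsCoveringMap p) (hq : IsCoveringMap q)
    (f : X → Y) (hf : Continuous f)
    (x₀ : X) (xt₀ : XT) (hxt₀ : p xt₀ = x₀)
    (f0 : XT → YT) (hf0 : IsLift p q f f0)
    (a : C(I, Y)) (ha0 : a 0 = f x₀) (ha1 : a 1 = f x₀)
    (H : C(X × I, Y)) (hH0 : ∀ x, H (x, 0) = f x) (hH1 : ∀ x, H (x, 1) = f x)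
    (hHa : ∀ t, H (x₀, t) = a t)
    (at' : C(I, YT)) (hat : ∀ t, q (at' t) = a t) (hat0 : at' 0 = f0 xt₀)
    (h : YT ≃ₜ YT) (hh : IsDeck q h) (hh1 : h (f0 xt₀) = at' 1) :
    ∃ HT : C(XT × I, YT), IsFPHomotopy p q HT ∧
      (∀ x, HT (x, 0) = f0 x) ∧ (∀ x, HT (x, 1) = h (f0 x)) ∧
      (∀ (x : XT) (t : I), q (HT (x, t)) = H (p x, t)) := by
  classical
  -- extend the homotopy to a map `XT × ℝ → Y`
  set g : XT × ℝ → Y := fun w => H (p w.1, Set.projIcc 0 1 zero_le_one w.2) with hgdef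
  have hg : Continuous g :=
    H.continuous.comp ((hp.continuous.comp continuous_fst).prodMk
      (continuous_projIcc.comp continuous_snd))
  have hkey : ∀ t : I, Set.projIcc (0:ℝ) 1 zero_le_one (t : ℝ) = t := fun t =>
    Set.projIcc_val zero_le_one t
  have h0 : ∀ z : XT, q (f0 z) = g (z, 0) := by
    intro z
    have : Set.projIcc (0:ℝ) 1 zero_le_one 0 = (0 : I) := by
      rw [Set.projIcc_left]; rfl
    rw [hf0.2 z, hgdef]
    simp only [this, hH0]
  choose N hNo hNz G hGc hGl hG0 using
    fun z => hq.exists_nbhd_lift hg hf0.1 h0 z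
  -- the lifts agree on overlaps
  have hagree : ∀ z z' : XT, z' ∈ N z → ∀ t : ℝ, t ∈ Set.Icc (0:ℝ) 1 →
      G z' (z', t) = G z (z', t) := by
    intro z z' hz' t ht
    have hpre : IsPreconnected (({z'} : Set XT) ×ˢ Set.Icc (0:ℝ) 1) :=
      isPreconnected_singleton.prod isPreconnected_Icc
    have heq := hq.eqOn_of_comp_eqOn hpre
      ((hGc z').mono (Set.prod_mono (Set.singleton_subset_iff.mpr (hNz z')) le_rfl))
      ((hGc z).mono (Set.prod_mono (Set.singleton_subset_iff.mpr hz') le_rfl))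
      (fun w hw => by
        rcases hw with ⟨hw1, hw2⟩
        have hw1' : w.1 = z' := hw1
        simp only [Function.comp_apply]
        rw [hGl z' w ⟨hw1' ▸ hNz z', hw2⟩, hGl z w ⟨hw1' ▸ hz', hw2⟩])
      (Set.mk_mem_prod rfl ⟨le_refl 0, zero_le_one⟩)
      (by rw [hG0 z' z' (hNz z'), hG0 z z' hz'])
    exact heq (Set.mk_mem_prod rfl ht)
  set HT0 : XT × I → YT := fun w => G w.1 (w.1, (w.2 : ℝ)) with hHT0
  have hHT0c : Continuous HT0 := by
    rw [continuous_iff_continuousAt]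
    rintro ⟨z, t⟩
    have hopen : IsOpen ((N z ×ˢ Set.univ : Set (XT × I))) :=
      (hNo z).prod isOpen_univ
    have hco : ContinuousOn (fun w : XT × I => G z (w.1, (w.2 : ℝ)))
        (N z ×ˢ Set.univ) := by
      refine (hGc z).comp
        (continuous_fst.prodMk (continuous_subtype_val.comp continuous_snd)).continuousOn ?_
      rintro ⟨z', t'⟩ ⟨hz', -⟩
      exact Set.mk_mem_prod hz' t'.2
    have : ContinuousOn HT0 (N z ×ˢ Set.univ) := by
      refine hco.congr ?_
      rintro ⟨z', t'⟩ ⟨hz', -⟩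
      exact hagree z z' hz' t' t'.2
    exact this.continuousAt (hopen.mem_nhds (Set.mk_mem_prod (hNz z) trivial))
  set HT : C(XT × I, YT) := ⟨HT0, hHT0c⟩ with hHT
  have hQ : ∀ (z : XT) (t : I), q (HT (z, t)) = H (p z, t) := by
    intro z t
    have := hGl z (z, (t : ℝ)) (Set.mk_mem_prod (hNz z) t.2)
    rw [hHT] at *
    simp only [ContinuousMap.coe_mk, hHT0]
    rw [this, hgdef]
    simp only [hkey]
  have hinit : ∀ z : XT, HT (z, 0) = f0 z := by
    intro z
    have : ((0 : I) : ℝ) = (0:ℝ) := rfl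
    simpa [hHT, hHT0, this] using hG0 z z (hNz z)
  -- the path `t ↦ HT (xt₀, t)` equals `at'`
  have hpath : (fun t : I => HT (xt₀, t)) = fun t => at' t := by
    refine hq.eq_of_comp_eq ?_ at'.continuous ?_ 0 ?_
    · exact HT.continuous.comp (Continuous.prodMk_right xt₀)
    · funext t
      simp only [Function.comp_apply]
      rw [hQ xt₀ t, hxt₀, hHa, hat]
    · rw [hinit xt₀, hat0]
  have hend1 : HT (xt₀, 1) = h (f0 xt₀) := by
    rw [hh1]
    exact congrFun hpath 1
  have hend : ∀ z : XT, HT (z, 1) = h (f0 z) := by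
    have := hq.eq_of_comp_eq (g₁ := fun z : XT => HT (z, 1)) (g₂ := fun z => h (f0 z))
      (HT.continuous.comp (continuous_id.prodMk continuous_const))
      (h.continuous.comp hf0.1) ?_ xt₀ hend1
    · exact fun z => congrFun this z
    · funext z
      simp only [Function.comp_apply]
      rw [hQ z 1, hH1, hh, hf0.2]
  refine ⟨HT, ?_, hinit, hend, hQ⟩
  rintro ⟨z, t⟩ ⟨z', t'⟩ hpz ht
  simp only at hpz ht
  rw [hQ, hQ, hpz, ht]
end

section
/- Let p : X̃ → X and q : Ỹ → Y be universal covering maps, f : X → Y continuous, x₀ ∈ X a base-point, x̃₀ ∈ p⁻¹(x₀), and f̃₀ a fixed lifting of f. Suppose h is a deck transformation of q and H̃ : X̃ × [0,1] → Ỹ is a fibre-preserving homotopy with H̃₀ = f̃₀ and H̃₁ = h ∘ f̃₀. Then there exists a continuous map H : X × [0,1] → Y with q ∘ H̃ = H ∘ (p × id), this H satisfies H(·,0) = H(·,1) = f, and the loop a(t) = q(H̃(x̃₀, t)) is a loop at f(x₀) satisfying H(x₀, t) = a(t); moreover the lift of a starting at f̃₀(x̃₀) ends at h(f̃₀(x̃₀)).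 In particular, the homotopy class of a belongs to the generalized Gottlieb group G^f(Y, f(x₀)). -/
open unitInterval Topology

theorem covSurjAux {E X : Type*} [TopologicalSpace E] [TopologicalSpace X]
    [PreconnectedSpace X] (p : E → X) (hp : IsCoveringMap p) (e0 : E) :
    Function.Surjective p := by
  have hclopen : IsClopen (Set.range p) := by
    constructor
    · rw [← isOpen_compl_iff]
      refine isOpen_iff_forall_mem_open.2 fun x hx => ?_
      obtain ⟨hd, U, hxU, hU, hfU, H, hH⟩ := hp x
      refine ⟨U, ?_, hU, hxU⟩
      intro y hy hyr
      obtain ⟨e, rfl⟩ := hyr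
      exact hx ⟨((H.symm (⟨x, hxU⟩, (H ⟨e, hy⟩).2) : p ⁻¹' U) : E), by rw [← hH]; simp⟩
    · exact hp.isOpenMap.isOpen_range
  have := hclopen.eq_univ ⟨p e0, Set.mem_range_self e0⟩
  intro x
  have hx : x ∈ Set.range p := by rw [this]; trivial
  exact hx

/-- A fibre-preserving homotopy `HT` from `f0` to `h ∘ f0` descends to a homotopy
`H : X × I → Y` from `f` to `f` whose trace at `x₀` is the loop `a(t) = q (HT (x̃₀, t))`;
moreover the lift of `a` starting at `f0 x̃₀` ends at `h (f0 x̃₀)`. In particular the class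
of `a` lies in the generalized Gottlieb group `G^f(Y, f x₀)`. -/
theorem stmt_7 {X Y XT YT : Type*} [TopologicalSpace X] [TopologicalSpace Y]
    [TopologicalSpace XT] [TopologicalSpace YT]
    [PathConnectedSpace X] [PathConnectedSpace Y]
    [LocallyPathConnectedSpace X] [LocallyPathConnectedSpace Y]
    [SimplyConnectedSpace XT] [SimplyConnectedSpace YT]
    [LocallyPathConnectedSpace XT] [LocallyPathConnectedSpace YT]
    (p : XT → X) (q : YT → Y) (hp : IsCoveringMap p) (hq : IsCoveringMap q)
    (f : X → Y) (hf : Continuous f)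
    (x₀ : X) (xt₀ : XT) (hxt₀ : p xt₀ = x₀)
    (f0 : XT → YT) (hf0 : IsLift p q f f0)
    (h : YT ≃ₜ YT) (hh : IsDeck q h)
    (HT : C(XT × I, YT)) (hfib : IsFPHomotopy p q HT)
    (hHT0 : ∀ x, HT (x, 0) = f0 x) (hHT1 : ∀ x, HT (x, 1) = h (f0 x)) :
    ∃ H : C(X × I, Y),
      (∀ (x : XT) (t : I), q (HT (x, t)) = H (p x, t)) ∧
      (∀ x, H (x, 0) = f x) ∧ (∀ x, H (x, 1) = f x) ∧
      (∀ t : I, H (x₀, t) = q (HT (xt₀, t))) ∧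
      ∃ at' : C(I, YT), (∀ t, q (at' t) = q (HT (xt₀, t))) ∧
        at' 0 = f0 xt₀ ∧ at' 1 = h (f0 xt₀) := by
  have hpsurj : Function.Surjective p := covSurjAux p hp xt₀
  have hPm : Function.Surjective (Prod.map p (id : I → I)) :=
    hpsurj.prodMap Function.surjective_id
  have hopen : IsOpenMap (Prod.map p (id : I → I)) :=
    hp.isOpenMap.prodMap IsOpenMap.id
  have hcont : Continuous (Prod.map p (id : I → I)) :=
    (hp.continuous).prodMap continuous_id
  have hquot : IsQuotientMap (Prod.map p (id : I → I)) := hopen.isQuotientMap hcont hPm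
  set g : X × I → Y := fun z => q (HT (Function.surjInv hPm z)) with hg
  have hkey : ∀ w : XT × I, g (Prod.map p id w) = q (HT w) := by
    intro w
    have h1 : Prod.map p (id : I → I) (Function.surjInv hPm (Prod.map p id w)) =
        Prod.map p id w := Function.surjInv_eq hPm _
    have h2 : p (Function.surjInv hPm (Prod.map p id w)).1 = p w.1 :=
      congrArg Prod.fst h1
    have h3 : (Function.surjInv hPm (Prod.map p id w)).2 = w.2 := by
      simpa using congrArg Prod.snd h1
    exact hfib _ _ h2 h3
  have hgc : Continuous g := by
    rw [hquot.continuous_iff]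
    have : g ∘ Prod.map p (id : I → I) = fun w => q (HT w) := funext hkey
    rw [this]
    exact hq.continuous.comp HT.continuous
  refine ⟨⟨g, hgc⟩, ?_, ?_, ?_, ?_, ?_⟩
  · intro x t
    exact (hkey (x, t)).symm
  · intro x
    obtain ⟨xt, rfl⟩ := hpsurj x
    have := hkey (xt, 0)
    simp only [ContinuousMap.coe_mk]
    rw [show ((p xt, (0:I)) : X × I) = Prod.map p id (xt, 0) from rfl, this, hHT0, hf0.2]
  · intro x
    obtain ⟨xt, rfl⟩ := hpsurj x
    have := hkey (xt, 1)
    simp only [ContinuousMap.coe_mk]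
    rw [show ((p xt, (1:I)) : X × I) = Prod.map p id (xt, 1) from rfl, this, hHT1, hh, hf0.2]
  · intro t
    have := hkey (xt₀, t)
    simp only [ContinuousMap.coe_mk]
    rw [show ((x₀, t) : X × I) = Prod.map p id (xt₀, t) by simp [Prod.map, hxt₀], this]
  · exact ⟨⟨fun t => HT (xt₀, t),
      HT.continuous.comp (Continuous.prodMk continuous_const continuous_id)⟩,
      fun t => rfl, hHT0 xt₀, hHT1 xt₀⟩
end

section
/- Let p : X̃ → X and q : Ỹ → Y be universal covering maps, f : X → Y continuous, x₀ ∈ X, x̃₀ ∈ p⁻¹(x₀), f̃₀ a fixed lifting of f, and f_* : D(X) → D(Y) the induced homomorphism of deck transformation groups. If a loop a at f(x₀) represents an element of the generalized Gottlieb group G^f(Y, f(x₀)), and h is the unique deck transformation of q sending f̃₀(x̃₀) to the endpoint of the lift of a starting at f̃₀(x̃₀), then h commutes with f_*(l) for every deck transformation l of p, and there exists a homotopy H̃ : X̃ × [0,1] → Ỹ with H̃₀ = f̃₀ and H̃₁ = h ∘ f̃₀. -/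
open unitInterval

section HLP

open Set Topology

variable {Z YT Y : Type*} [TopologicalSpace Z] [TopologicalSpace YT] [TopologicalSpace Y]
  {q : YT → Y}

/-- Lifting over a single strip `N × [c,d]` contained in an evenly covered set. -/
lemma strip_lift_s11 {F : Type*} [TopologicalSpace F]
    (e : Bundle.Trivialization F q) (G : Z × ℝ → Y) (hG : Continuous G)
    {N : Set Z} {c d : ℝ} (hcd : c ≤ d)
    (hsub : ∀ z ∈ N, ∀ s ∈ Icc c d, G (z, s) ∈ e.baseSet)
    (L0 : Z → YT) (hL0 : ContinuousOn L0 N)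
    (hL0q : ∀ z ∈ N, q (L0 z) = G (z, c)) :
    ∃ L : Z × ℝ → YT, ContinuousOn L (N ×ˢ Icc c d) ∧
      (∀ z ∈ N, ∀ s ∈ Icc c d, q (L (z, s)) = G (z, s)) ∧
      (∀ z ∈ N, L (z, c) = L0 z) := by
  have hmemsrc : ∀ z ∈ N, L0 z ∈ e.source := fun z hz =>
    e.mem_source.2 (by rw [hL0q z hz]; exact hsub z hz c ⟨le_refl c, hcd⟩)
  refine ⟨fun w => e.toPartialHomeomorph.symm (G w, (e (L0 w.1)).2), ?_, ?_, ?_⟩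
  · apply e.toPartialHomeomorph.continuousOn_symm.comp
    · apply ContinuousOn.prodMk
      · exact hG.continuousOn
      · apply continuous_snd.comp_continuousOn
        apply e.continuousOn_toFun.comp (hL0.comp continuous_fst.continuousOn ?_) ?_
        · exact fun w hw => hw.1
        · exact fun w hw => hmemsrc w.1 hw.1
    · intro w hw
      rw [e.mem_target]
      exact hsub w.1 hw.1 w.2 hw.2
  · intro z hz s hs
    exact e.proj_symm_apply' (hsub z hz s hs)
  · intro z hz
    have h1 : G (z, c) = q (L0 z) := (hL0q z hz).symm
    simp only [h1]
    exact e.symm_apply_mk_proj (hmemsrc z hz)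

set_option maxHeartbeats 2000000 in
/-- Homotopy lifting property for covering maps. -/
lemma covering_homotopy_lift (hq : IsCoveringMap q) (G : Z × I → Y) (hG : Continuous G)
    (g0 : Z → YT) (hg0c : Continuous g0) (hg00 : ∀ z, q (g0 z) = G (z, 0)) :
    ∃ HT : Z × I → YT, Continuous HT ∧ (∀ w, q (HT w) = G w) ∧ ∀ z, HT (z, 0) = g0 z := by
  classical
  set Gr : Z × ℝ → Y := fun w => G (w.1, Set.projIcc 0 1 zero_le_one w.2) with hGrdef
  have hGr : Continuous Gr :=
    hG.comp (continuous_fst.prodMk (continuous_projIcc.comp continuous_snd))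
  have hGrcoe : ∀ (z : Z) (t : I), Gr (z, (t : ℝ)) = G (z, t) := by
    intro z t; simp [hGrdef, Set.projIcc_val]
  have hGr0 : ∀ z : Z, Gr (z, (0 : ℝ)) = G (z, 0) := fun z => hGrcoe z 0
  have hne : ∀ (z₀ : Z) (s : ℝ), Nonempty (q ⁻¹' {Gr (z₀, s)}) := by
    have hR : IsClopen (Set.range q) := by
      refine ⟨?_, hq.isOpenMap.isOpen_range⟩
      rw [← isOpen_compl_iff, isOpen_iff_forall_mem_open]
      intro y hy
      obtain ⟨_, U, hyU, hUo, _, H, _⟩ := hq y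
      refine ⟨U, ?_, hUo, hyU⟩
      rintro u hu ⟨e, rfl⟩
      exact hy ⟨(H ⟨e, hu⟩).2.1, (H ⟨e, hu⟩).2.2⟩
    intro z₀ s
    have hc : Continuous (fun t : I => G (z₀, t)) := hG.comp (continuous_const.prodMk continuous_id)
    have hall := (hR.preimage hc).eq_univ ⟨0, g0 z₀, hg00 z₀⟩
    obtain ⟨e, he⟩ : Gr (z₀, s) ∈ Set.range q := by
      have : Set.projIcc 0 1 zero_le_one s ∈ (fun t : I => G (z₀, t)) ⁻¹' Set.range q :=
        hall ▸ Set.mem_univ _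
      exact this
    exact ⟨⟨e, he⟩⟩
  -- local lifting around each point
  have loc : ∀ z₀ : Z, ∃ N : Set Z, IsOpen N ∧ z₀ ∈ N ∧ ∃ L : Z × ℝ → YT,
      ContinuousOn L (N ×ˢ Icc (0:ℝ) 1) ∧
      (∀ z ∈ N, ∀ s ∈ Icc (0:ℝ) 1, q (L (z, s)) = Gr (z, s)) ∧
      (∀ z ∈ N, L (z, 0) = g0 z) := by
    intro z₀
    have key : ∀ s : ℝ, ∃ (N' : Set Z) (J : Set ℝ), IsOpen N' ∧ IsOpen J ∧ z₀ ∈ N' ∧ s ∈ J ∧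
        ∀ w ∈ N' ×ˢ J, Gr w ∈ ((hq (Gr (z₀, s))).toTrivialization).baseSet := by
      intro s
      have hb : IsOpen (Gr ⁻¹' ((hq (Gr (z₀, s))).toTrivialization).baseSet) :=
        ((hq (Gr (z₀, s))).toTrivialization.open_baseSet).preimage hGr
      have hmem : (z₀, s) ∈ Gr ⁻¹' ((hq (Gr (z₀, s))).toTrivialization).baseSet :=
        (hq (Gr (z₀, s))).mem_toTrivialization_baseSet
      obtain ⟨u, v, hu, hv, hz, hs, hsub⟩ := isOpen_prod_iff.mp hb z₀ s hmem
      exact ⟨u, v, hu, hv, hz, hs, fun w hw => hsub hw⟩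
    choose Nf Jf hNo hJo hNz hsJ hNJ using key
    obtain ⟨δ, hδ, hball⟩ := lebesgue_number_lemma_of_metric
      (isCompact_Icc : IsCompact (Icc (0:ℝ) 1)) hJo
      (fun s _ => Set.mem_iUnion.2 ⟨s, hsJ s⟩)
    obtain ⟨n, hn⟩ := exists_nat_one_div_lt hδ
    set m : ℕ := n + 1 with hm
    have hmpos : (0:ℝ) < m := by positivity
    have hinv : 1 / (m:ℝ) < δ := by rw [hm]; push_cast; exact hn
    set mid : ℕ → ℝ := fun k => ((k:ℝ) + 1/2) / m with hmid
    have hmidmem : ∀ k : ℕ, k < m → mid k ∈ Icc (0:ℝ) 1 := by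
      intro k hk
      constructor
      · apply div_nonneg _ hmpos.le; positivity
      · rw [div_le_one hmpos]
        have : (k:ℝ) + 1 ≤ m := by exact_mod_cast Nat.succ_le_of_lt hk
        linarith
    have hskex : ∀ k : ℕ, ∃ s : ℝ, k < m → Metric.ball (mid k) δ ⊆ Jf s := by
      intro k
      by_cases hk : k < m
      · obtain ⟨s, hs⟩ := hball (mid k) (hmidmem k hk)
        exact ⟨s, fun _ => hs⟩
      · exact ⟨0, fun h => absurd h hk⟩
    choose sk hskspec using hskex
    set N : Set Z := ⋂ k ∈ Finset.range m, Nf (sk k) with hN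
    have hNopen : IsOpen N := isOpen_biInter_finset (fun k _ => hNo (sk k))
    have hz₀N : z₀ ∈ N := Set.mem_iInter₂.2 fun k _ => hNz (sk k)
    have hIccsub : ∀ k : ℕ, k < m →
        Icc ((k:ℝ)/m) (((k:ℝ)+1)/m) ⊆ Metric.ball (mid k) δ := by
      intro k hk s hs
      rw [Metric.mem_ball, Real.dist_eq, abs_lt]
      have h1 : (k:ℝ)/m = mid k - 1/(2*m) := by
        rw [hmid]; field_simp; ring
      have h2 : ((k:ℝ)+1)/m = mid k + 1/(2*m) := by
        rw [hmid]; field_simp; ring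
      have h3 : 1/(2*(m:ℝ)) < δ := by
        have h4 : 1/(2*(m:ℝ)) ≤ 1/m := by
          apply div_le_div_of_nonneg_left one_pos.le hmpos; linarith
        linarith
      obtain ⟨hs1, hs2⟩ := hs
      rw [h1] at hs1; rw [h2] at hs2
      constructor <;> linarith
    have hstrip : ∀ k : ℕ, k < m → ∀ z ∈ N, ∀ s ∈ Icc ((k:ℝ)/m) (((k:ℝ)+1)/m),
        Gr (z, s) ∈ ((hq (Gr (z₀, sk k))).toTrivialization).baseSet := by
      intro k hk z hz s hs
      apply hNJ (sk k) (z, s)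
      exact ⟨Set.mem_iInter₂.1 hz k (Finset.mem_range.2 hk), hskspec k hk (hIccsub k hk hs)⟩
    -- inductive construction over strips
    have ind : ∀ k : ℕ, k ≤ m → ∃ L : Z × ℝ → YT,
        ContinuousOn L (N ×ˢ Icc (0:ℝ) ((k:ℝ)/m)) ∧
        (∀ z ∈ N, ∀ s ∈ Icc (0:ℝ) ((k:ℝ)/m), q (L (z, s)) = Gr (z, s)) ∧
        (∀ z ∈ N, L (z, 0) = g0 z) := by
      intro k
      induction k with
      | zero =>
        intro _
        refine ⟨fun w => g0 w.1, (hg0c.comp continuous_fst).continuousOn, ?_, fun z _ => rfl⟩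
        intro z _ s hs
        have hs0 : s = 0 := by
          simp only [Nat.cast_zero, zero_div] at hs
          exact le_antisymm hs.2 hs.1
        rw [hs0, hg00 z, hGr0 z]
      | succ k ih =>
        intro hk1
        have hkm : k < m := hk1
        obtain ⟨L, hLc, hLq, hL00⟩ := ih (Nat.le_of_succ_le hk1)
        have hknn : (0:ℝ) ≤ (k:ℝ)/m := by positivity
        have hkk1 : (k:ℝ)/m ≤ ((k:ℝ)+1)/m := by gcongr; linarith
        set L0 : Z → YT := fun z => L (z, (k:ℝ)/m) with hL0def
        have hL0c : ContinuousOn L0 N := by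
          apply hLc.comp (Continuous.continuousOn (continuous_id.prodMk continuous_const))
          intro z hz; exact Set.mk_mem_prod hz ⟨hknn, le_refl _⟩
        have hL0q : ∀ z ∈ N, q (L0 z) = Gr (z, (k:ℝ)/m) := fun z hz =>
          hLq z hz _ ⟨hknn, le_refl _⟩
        obtain ⟨S, hSc, hSq, hSstart⟩ := strip_lift_s11
          ((hq (Gr (z₀, sk k))).toTrivialization) Gr hGr hkk1
          (hstrip k hkm) L0 hL0c hL0q
        refine ⟨fun w => if w.2 ≤ (k:ℝ)/m then L (w.1, min w.2 ((k:ℝ)/m))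
          else S (w.1, max w.2 ((k:ℝ)/m)), ?_, ?_, ?_⟩
        · simp only [Nat.cast_add, Nat.cast_one]
          have hA : ContinuousOn (fun w : Z × ℝ => L (w.1, min w.2 ((k:ℝ)/m)))
              (N ×ˢ Icc (0:ℝ) (((k:ℝ)+1)/m)) := by
            apply hLc.comp
              ((continuous_fst.prodMk (continuous_snd.min continuous_const)).continuousOn)
            intro w hw
            exact Set.mk_mem_prod hw.1 ⟨le_min hw.2.1 hknn, min_le_right _ _⟩
          have hB : ContinuousOn (fun w : Z × ℝ => S (w.1, max w.2 ((k:ℝ)/m)))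
              (N ×ˢ Icc (0:ℝ) (((k:ℝ)+1)/m)) := by
            apply hSc.comp
              ((continuous_fst.prodMk (continuous_snd.max continuous_const)).continuousOn)
            intro w hw
            exact Set.mk_mem_prod hw.1 ⟨le_max_right _ _, max_le hw.2.2 hkk1⟩
          apply ContinuousOn.if
          · intro w hw
            have hw2 : w.2 = (k:ℝ)/m :=
              frontier_le_subset_eq continuous_snd continuous_const hw.2
            simp only [hw2, min_self, max_self]
            rw [hSstart w.1 hw.1.1]
          · exact hA.mono Set.inter_subset_left
          · exact hB.mono Set.inter_subset_left
        · intro z hz s hs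
          simp only [Nat.cast_add, Nat.cast_one] at hs
          by_cases hsk : s ≤ (k:ℝ)/m
          · simp only [if_pos hsk, min_eq_left hsk]
            exact hLq z hz s ⟨hs.1, hsk⟩
          · simp only [if_neg hsk, max_eq_left (le_of_not_ge hsk)]
            exact hSq z hz s ⟨le_of_not_ge hsk, hs.2⟩
        · intro z hz
          simp only [if_pos hknn, min_eq_left hknn]
          exact hL00 z hz
    obtain ⟨L, hLc, hLq, hL00⟩ := ind m le_rfl
    have hmm : ((m:ℕ):ℝ)/(m:ℝ) = 1 := div_self (ne_of_gt hmpos)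
    rw [hmm] at hLc hLq
    exact ⟨N, hNopen, hz₀N, L, hLc, hLq, hL00⟩
  -- glue the local lifts
  choose Nset hNopen hNmem Lf hLcf hLqf hL0f using loc
  have hslice : ∀ (z₀ z : Z), z ∈ Nset z₀ → ∀ t : I,
      Lf z (z, (t:ℝ)) = Lf z₀ (z, (t:ℝ)) := by
    intro z₀ z hz
    have hu : Continuous (fun t : I => Lf z (z, (t:ℝ))) :=
      (hLcf z).comp_continuous (continuous_const.prodMk continuous_subtype_val)
        (fun t => Set.mk_mem_prod (hNmem z) t.2)
    have hv : Continuous (fun t : I => Lf z₀ (z, (t:ℝ))) :=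
      (hLcf z₀).comp_continuous (continuous_const.prodMk continuous_subtype_val) (fun t => Set.mk_mem_prod hz t.2)
    have hqc : q ∘ (fun t : I => Lf z (z, (t:ℝ))) = q ∘ (fun t : I => Lf z₀ (z, (t:ℝ))) := by
      funext t
      simp only [Function.comp_apply]
      rw [hLqf z z (hNmem z) _ t.2, hLqf z₀ z hz _ t.2]
    have h0 : (fun t : I => Lf z (z, (t:ℝ))) 0 = (fun t : I => Lf z₀ (z, (t:ℝ))) 0 := by
      show Lf z (z, ((0:I):ℝ)) = Lf z₀ (z, ((0:I):ℝ))
      rw [show ((0:I):ℝ) = (0:ℝ) from rfl, hL0f z z (hNmem z), hL0f z₀ z hz]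
    exact fun t => congrFun (hq.eq_of_comp_eq hu hv hqc 0 h0) t
  refine ⟨fun w => Lf w.1 (w.1, (w.2:ℝ)), ?_, ?_, ?_⟩
  · rw [continuous_iff_continuousAt]
    rintro ⟨z₀, t₀⟩
    have hopen : IsOpen (Nset z₀ ×ˢ (Set.univ : Set I)) := (hNopen z₀).prod isOpen_univ
    have hcont : ContinuousOn (fun w : Z × I => Lf z₀ (w.1, (w.2:ℝ)))
        (Nset z₀ ×ˢ Set.univ) := by
      apply (hLcf z₀).comp (Continuous.continuousOn (continuous_fst.prodMk (continuous_subtype_val.comp continuous_snd)))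
      intro w hw
      exact Set.mk_mem_prod hw.1 w.2.2
    have heq : Set.EqOn (fun w : Z × I => Lf w.1 (w.1, (w.2:ℝ)))
        (fun w : Z × I => Lf z₀ (w.1, (w.2:ℝ))) (Nset z₀ ×ˢ Set.univ) :=
      fun w hw => hslice z₀ w.1 hw.1 w.2
    exact (hcont.congr heq).continuousAt
      (hopen.mem_nhds (Set.mk_mem_prod (hNmem z₀) (Set.mem_univ t₀)))
  · rintro ⟨z, t⟩
    rw [hLqf z z (hNmem z) _ t.2, hGrcoe]
  · intro z
    show Lf z (z, ((0:I):ℝ)) = g0 z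
    rw [show ((0:I):ℝ) = (0:ℝ) from rfl]
    exact hL0f z z (hNmem z)

end HLP

/-- If a loop `a` at `f x₀` represents an element of the generalized Gottlieb group
`G^f(Y, f x₀)` (witnessed by a homotopy `H` from `f` to `f` with trace `a` at `x₀`), and `h`
is the deck transformation of `q` sending `f0 x̃₀` to the endpoint of the lift of `a`
starting at `f0 x̃₀`, then `h` commutes with every `f_*(l)` and there is a homotopy `HT`
with `HT_0 = f0` and `HT_1 = h ∘ f0`. -/
theorem stmt_11 {X Y XT YT : Type*} [TopologicalSpace X] [TopologicalSpace Y]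
    [TopologicalSpace XT] [TopologicalSpace YT]
    [PathConnectedSpace X] [PathConnectedSpace Y]
    [LocallyPathConnectedSpace X] [LocallyPathConnectedSpace Y]
    [SimplyConnectedSpace XT] [SimplyConnectedSpace YT]
    [LocallyPathConnectedSpace XT] [LocallyPathConnectedSpace YT]
    (p : XT → X) (q : YT → Y) (hp : IsCoveringMap p) (hq : IsCoveringMap q)
    (f : X → Y) (hf : Continuous f)
    (x₀ : X) (xt₀ : XT) (hxt₀ : p xt₀ = x₀)
    (f0 : XT → YT) (hf0 : IsLift p q f f0)
    -- the induced homomorphism `f_*` on deck transformation groups: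
    (fstar : (XT ≃ₜ XT) → (YT ≃ₜ YT))
    (hfstar : ∀ l : XT ≃ₜ XT, IsDeck p l →
      IsDeck q (fstar l) ∧ ∀ x, f0 (l x) = fstar l (f0 x))
    (a : C(I, Y)) (ha0 : a 0 = f x₀) (ha1 : a 1 = f x₀)
    (H : C(X × I, Y)) (hH0 : ∀ x, H (x, 0) = f x) (hH1 : ∀ x, H (x, 1) = f x)
    (hHa : ∀ t, H (x₀, t) = a t)
    (h : YT ≃ₜ YT) (hh : IsDeck q h)
    (at' : C(I, YT)) (hat : ∀ t, q (at' t) = a t)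
    (hat0 : at' 0 = f0 xt₀) (hat1 : at' 1 = h (f0 xt₀)) :
    (∀ l : XT ≃ₜ XT, IsDeck p l → ∀ y, h (fstar l y) = fstar l (h y)) ∧
      ∃ HT : C(XT × I, YT), (∀ x, HT (x, 0) = f0 x) ∧ (∀ x, HT (x, 1) = h (f0 x)) := by
  obtain ⟨HT, hHTc, hHTq, hHT0⟩ := covering_homotopy_lift hq
    (fun w : XT × I => H (p w.1, w.2))
    (H.continuous.comp ((hp.continuous.comp continuous_fst).prodMk continuous_snd))
    f0 hf0.1 (fun z => by show q (f0 z) = H (p z, 0); rw [hf0.2, hH0])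
  have hslice : ∀ t : I, HT (xt₀, t) = at' t := by
    have h1 : Continuous (fun t : I => HT (xt₀, t)) :=
      hHTc.comp (continuous_const.prodMk continuous_id)
    have h2 : q ∘ (fun t : I => HT (xt₀, t)) = q ∘ at' := by
      funext t
      simp only [Function.comp_apply]
      rw [hHTq (xt₀, t)]
      show H (p xt₀, t) = q (at' t)
      rw [hxt₀, hHa, hat]
    have h3 : (fun t : I => HT (xt₀, t)) 0 = at' 0 := by
      show HT (xt₀, 0) = at' 0
      rw [hHT0, hat0]
    exact fun t => congrFun (hq.eq_of_comp_eq h1 at'.continuous h2 0 h3) t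
  have hend : HT (xt₀, 1) = h (f0 xt₀) := by rw [hslice 1, hat1]
  have hone : ∀ z, HT (z, 1) = h (f0 z) := by
    have h1 : Continuous (fun z : XT => HT (z, 1)) :=
      hHTc.comp (continuous_id.prodMk continuous_const)
    have h2c : Continuous (fun z : XT => h (f0 z)) := h.continuous.comp hf0.1
    have h2 : q ∘ (fun z : XT => HT (z, 1)) = q ∘ (fun z : XT => h (f0 z)) := by
      funext z
      simp only [Function.comp_apply]
      rw [hHTq (z, 1)]
      show H (p z, 1) = q (h (f0 z))
      rw [hH1, hh, hf0.2]
    exact fun z => congrFun (hq.eq_of_comp_eq h1 h2c h2 xt₀ (by rw [hend])) z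
  constructor
  · intro l hl y
    obtain ⟨hdl, hcomm⟩ := hfstar l hl
    have hK : ∀ w : XT × I, HT (l w.1, w.2) = fstar l (HT w) := by
      have h1 : Continuous (fun w : XT × I => HT (l w.1, w.2)) :=
        hHTc.comp ((l.continuous.comp continuous_fst).prodMk continuous_snd)
      have h2 : Continuous (fun w : XT × I => fstar l (HT w)) :=
        (fstar l).continuous.comp hHTc
      have h3 : q ∘ (fun w : XT × I => HT (l w.1, w.2))
          = q ∘ (fun w : XT × I => fstar l (HT w)) := by
        funext w
        simp only [Function.comp_apply]
        rw [hdl (HT w), hHTq w, hHTq (l w.1, w.2)]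
        show H (p (l w.1), w.2) = H (p w.1, w.2)
        rw [hl w.1]
      have h4 : (fun w : XT × I => HT (l w.1, w.2)) (xt₀, 0)
          = (fun w : XT × I => fstar l (HT w)) (xt₀, 0) := by
        show HT (l xt₀, 0) = fstar l (HT (xt₀, 0))
        rw [hHT0 (l xt₀), hHT0 xt₀, hcomm xt₀]
      exact fun w => congrFun (hq.eq_of_comp_eq h1 h2 h3 (xt₀, 0) h4) w
    have hK1 := hK (xt₀, 1)
    rw [hone (l xt₀), hend, hcomm xt₀] at hK1
    have hfin := hq.eq_of_comp_eq (g₁ := fun y' => h (fstar l y'))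
      (g₂ := fun y' => fstar l (h y'))
      (h.continuous.comp (fstar l).continuous) ((fstar l).continuous.comp h.continuous)
      (by funext y'; simp only [Function.comp_apply]; rw [hh, hdl, hdl, hh])
      (f0 xt₀) hK1
    exact congrFun hfin y
  · exact ⟨⟨fun w => HT w, hHTc⟩, hHT0, fun z => hone z⟩
end

section
/- Let p : X̃ → X and q : Ỹ → Y be universal covering maps, f : X → Y continuous, x₀ ∈ X, x̃₀ ∈ p⁻¹(x₀), and f̃₀ a fixed lifting of f. Let h be a deck transformation of q and H̃ : X̃ × [0,1] → Ỹ a homotopy with H̃₀ = f̃₀ and H̃₁ = h ∘ f̃₀, and set φ(t) = q(H̃(x̃₀, t)), a loop at f(x₀). Then for every m ≥ 2 and every continuous map α : S^m → X from the m-sphere with α(b) = x₀ at the base-point b ∈ S^m, there exists a continuous map F : S^m × [0,1] → Y such that F(s, 0) = F(s, 1) = f(α(s)) for all s ∈ S^m and F(b, t) = φ(t) for all t ∈ [0,1]. -/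
open unitInterval

lemma I_coe_min (a b : I) : ((min a b : I) : ℝ) = min (a : ℝ) (b : ℝ) := by
  rcases le_total a b with h | h
  · rw [min_eq_left h, min_eq_left (Subtype.coe_le_coe.mpr h)]
  · rw [min_eq_right h, min_eq_right (Subtype.coe_le_coe.mpr h)]

lemma I_coe_max (a b : I) : ((max a b : I) : ℝ) = max (a : ℝ) (b : ℝ) := by
  rcases le_total a b with h | h
  · rw [max_eq_right h, max_eq_right (Subtype.coe_le_coe.mpr h)]
  · rw [max_eq_left h, max_eq_left (Subtype.coe_le_coe.mpr h)]

lemma step_lift {Z E X : Type*} [TopologicalSpace Z] [TopologicalSpace E] [TopologicalSpace X]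
    {p : E → X} {H : Z × I → X} (hH : Continuous H)
    {ta tb : I} (hta : ta ≤ tb)
    {x : X} (T : Bundle.Trivialization (p ⁻¹' {x}) p)
    (hT : ∀ z, ∀ s ∈ Set.Icc ta tb, H (z, s) ∈ T.baseSet)
    {G : Z × I → E} (hGc : Continuous G)
    (hGp : ∀ z s, p (G (z, s)) = H (z, min s ta)) :
    ∃ G' : Z × I → E, Continuous G' ∧ (∀ z s, p (G' (z, s)) = H (z, min s tb)) ∧
      (∀ z, ∀ s : I, s ≤ ta → G' (z, s) = G (z, s)) := by
  have hmem : ∀ z, G (z, ta) ∈ T.source := by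
    intro z
    rw [T.mem_source, hGp, min_self]
    exact hT z ta ⟨le_refl _, hta⟩
  have hclamp : ∀ s : I, min (max s ta) tb ∈ Set.Icc ta tb :=
    fun s => ⟨le_min (le_max_right _ _) hta, min_le_right _ _⟩
  set φ : Z × I → E := fun zs =>
    T.toPartialHomeomorph.symm (H (zs.1, min (max zs.2 ta) tb), (T (G (zs.1, ta))).2) with hφ
  have htarget : ∀ (z : Z) (s : I),
      (H (z, min (max s ta) tb), (T (G (z, ta))).2) ∈ T.target := by
    intro z s
    rw [T.mem_target]
    exact hT z _ (hclamp s)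
  have c1 : Continuous fun z : Z => (T (G (z, ta))).2 := by
    refine continuous_snd.comp ?_
    refine T.continuousOn_toFun.comp_continuous ?_ hmem
    exact hGc.comp (continuous_id.prodMk continuous_const)
  have c2 : Continuous fun zs : Z × I => H (zs.1, min (max zs.2 ta) tb) := by
    refine hH.comp (continuous_fst.prodMk ?_)
    refine continuous_induced_rng.mpr ?_
    have : (Subtype.val ∘ fun zs : Z × I => min (max zs.2 ta) tb) =
        fun zs : Z × I => min (max (zs.2 : ℝ) (ta : ℝ)) (tb : ℝ) := by
      funext zs
      simp [Function.comp, I_coe_min, I_coe_max]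
    rw [this]
    exact ((continuous_subtype_val.comp continuous_snd).max continuous_const).min
      continuous_const
  have cφ : Continuous φ := by
    refine T.toPartialHomeomorph.continuousOn_symm.comp_continuous
      (c2.prodMk (c1.comp continuous_fst)) ?_
    exact fun zs => htarget zs.1 zs.2
  have hbdry : ∀ z : Z, G (z, ta) = φ (z, ta) := by
    intro z
    rw [hφ]
    dsimp only
    rw [show max ta ta = ta from max_self ta, show min ta tb = ta from min_eq_left hta]
    rw [show H (z, ta) = p (G (z, ta)) by rw [hGp, min_self]]
    exact (T.symm_apply_mk_proj (hmem z)).symm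
  refine ⟨fun zs => if ((zs.2 : ℝ)) ≤ ((ta : ℝ)) then G zs else φ zs, ?_, ?_, ?_⟩
  · refine continuous_if_le (continuous_subtype_val.comp continuous_snd) continuous_const
      hGc.continuousOn cφ.continuousOn ?_
    rintro ⟨z, s⟩ hs
    have hsta : s = ta := Subtype.ext hs
    rw [hsta]
    exact hbdry z
  · intro z s
    dsimp only
    by_cases hs : (s : ℝ) ≤ (ta : ℝ)
    · have hs' : s ≤ ta := hs
      rw [if_pos hs, hGp, min_eq_left hs', min_eq_left (le_trans hs' hta)]
    · rw [if_neg hs]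
      have hσs : ta ≤ s := le_of_not_ge hs
      have h2 := T.proj_symm_apply (htarget z s)
      rw [hφ]
      dsimp only
      dsimp only at h2
      exact h2.trans (by rw [max_eq_left hσs])
  · intro z s hs
    dsimp only
    rw [if_pos (Subtype.coe_le_coe.mpr hs)]

lemma local_lift {Z E X : Type*} [TopologicalSpace Z] [TopologicalSpace E] [TopologicalSpace X]
    {p : E → X} (hp : IsCoveringMap p) {H : Z × I → X} (hH : Continuous H)
    {g : Z → E} (hg : Continuous g) (h0 : ∀ z, p (g z) = H (z, 0)) (z₀ : Z) :
    ∃ N : Set Z, IsOpen N ∧ z₀ ∈ N ∧ ∃ G : Z × I → E,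
      ContinuousOn G (N ×ˢ (Set.univ : Set I)) ∧
      (∀ z ∈ N, ∀ s, p (G (z, s)) = H (z, s)) ∧ (∀ z ∈ N, G (z, 0) = g z) := by
  classical
  -- tube lemma data
  have hne : ∀ u : I, Nonempty (p ⁻¹' {H (z₀, u)}) := by
    intro u
    obtain ⟨Γ, hΓ, -⟩ := hp.exists_path_lifts
      ⟨fun t => H (z₀, t), hH.comp (continuous_const.prodMk continuous_id)⟩ (g z₀) (h0 z₀).symm
    exact ⟨⟨Γ u, show p (Γ u) = H (z₀, u) from congrFun hΓ u⟩⟩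
  have tube : ∀ u : I, ∃ (A : Set Z) (B : Set I), IsOpen A ∧ IsOpen B ∧ z₀ ∈ A ∧ u ∈ B ∧
      ∀ z ∈ A, ∀ s ∈ B, H (z, s) ∈ ((hp (H (z₀, u))).toTrivialization).baseSet := by
    intro u
    have hpre : IsOpen (H ⁻¹' ((hp (H (z₀, u))).toTrivialization).baseSet) :=
      ((hp (H (z₀, u))).toTrivialization).open_baseSet.preimage hH
    have hmem : (z₀, u) ∈ H ⁻¹' ((hp (H (z₀, u))).toTrivialization).baseSet :=
      (hp (H (z₀, u))).mem_toTrivialization_baseSet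
    obtain ⟨A, B, hA, hB, hzA, huB, hsub⟩ := isOpen_prod_iff.mp hpre z₀ u hmem
    exact ⟨A, B, hA, hB, hzA, huB, fun z hz s hs => hsub (Set.mk_mem_prod hz hs)⟩
  choose A B hA hB hzA huB key using tube
  obtain ⟨t, ht0, htmono, ⟨n₀, htn⟩, hsub⟩ :=
    exists_monotone_Icc_subset_open_cover_unitInterval (c := B) hB
      (fun s _ => Set.mem_iUnion.mpr ⟨s, huB s⟩)
  choose u hu using hsub
  set N : Set Z := ⋂ i ∈ Finset.range n₀, A (u i) with hN
  have hNopen : IsOpen N := isOpen_biInter_finset (fun i _ => hA _)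
  have hNmem : z₀ ∈ N := Set.mem_iInter₂.mpr (fun i _ => hzA _)
  have hNsub : ∀ i < n₀, ∀ z ∈ N, z ∈ A (u i) := by
    intro i hi z hz
    exact Set.mem_iInter₂.mp hz i (Finset.mem_range.mpr hi)
  -- the inductive construction on the subtype
  have main : ∀ i : ℕ, ∃ G : ↥N × I → E, Continuous G ∧
      (∀ (z : ↥N) (s : I), p (G (z, s)) = H (z.1, min s (t i))) ∧
      (∀ z : ↥N, G (z, 0) = g z.1) := by
    intro i
    induction i with
    | zero =>
      refine ⟨fun zs => g zs.1.1, hg.comp (continuous_subtype_val.comp continuous_fst), ?_, ?_⟩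
      · intro z s
        have : min s (t 0) = 0 := by
          rw [ht0]
          exact min_eq_right s.2.1
        rw [this, h0]
      · intro z; rfl
    | succ i ih =>
      obtain ⟨G, hGc, hGp, hG0⟩ := ih
      by_cases hi : i < n₀
      · have hH' : Continuous fun zs : ↥N × I => H (zs.1.1, zs.2) :=
          hH.comp ((continuous_subtype_val.comp continuous_fst).prodMk continuous_snd)
        obtain ⟨G', hG'c, hG'p, hG'old⟩ := step_lift hH' (htmono (Nat.le_succ i))
          ((hp (H (z₀, u i))).toTrivialization)
          (fun z s hs => key (u i) z.1 (hNsub i hi z.1 z.2) s (hu i hs)) hGc hGp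
        refine ⟨G', hG'c, hG'p, ?_⟩
        intro z
        rw [hG'old z 0 (t i).2.1, hG0]
      · push_neg at hi
        have h1 : t i = t (i + 1) := by rw [htn i hi, htn (i+1) (Nat.le_succ_of_le hi)]
        exact ⟨G, hGc, fun z s => by rw [hGp, h1], hG0⟩
  obtain ⟨G, hGc, hGp, hG0⟩ := main n₀
  have htn₀ : t n₀ = 1 := htn n₀ le_rfl
  refine ⟨N, hNopen, hNmem, fun zs => if h : zs.1 ∈ N then G (⟨zs.1, h⟩, zs.2) else g zs.1,
      ?_, ?_, ?_⟩
  · rw [continuousOn_iff_continuous_restrict]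
    have : (Set.domRestrict (N ×ˢ (Set.univ : Set I))
        fun zs => if h : zs.1 ∈ N then G (⟨zs.1, h⟩, zs.2) else g zs.1) =
        fun w : ↥(N ×ˢ (Set.univ : Set I)) => G (⟨w.1.1, w.2.1⟩, w.1.2) := by
      funext w
      simp only [Set.domRestrict_apply, dif_pos w.2.1]
    rw [this]
    refine hGc.comp (Continuous.prodMk ?_ ?_)
    · exact Continuous.subtype_mk (continuous_fst.comp continuous_subtype_val) _
    · exact continuous_snd.comp continuous_subtype_val
  · intro z hz s
    simp only [dif_pos hz]
    have : min s (t n₀) = s := by rw [htn₀]; exact min_eq_left s.2.2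
    rw [hGp ⟨z, hz⟩ s, this]
  · intro z hz
    simp only [dif_pos hz]
    exact hG0 ⟨z, hz⟩

theorem covering_homotopy_lift_s12 {Z E X : Type*}
    [TopologicalSpace Z] [TopologicalSpace E] [TopologicalSpace X]
    {p : E → X} (hp : IsCoveringMap p) {H : Z × I → X} (hH : Continuous H)
    {g : Z → E} (hg : Continuous g) (h0 : ∀ z, p (g z) = H (z, 0)) :
    ∃ G : Z × I → E, Continuous G ∧ (∀ z s, p (G (z, s)) = H (z, s)) ∧
      (∀ z, G (z, 0) = g z) := by
  choose N hNo hNm G hGc hGp hG0 using fun z₀ => local_lift hp hH hg h0 z₀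
  have slice : ∀ (z₀ : Z) (z : Z), z ∈ N z₀ → Continuous fun s : I => G z₀ (z, s) := by
    intro z₀ z hz
    refine (hGc z₀).comp_continuous (continuous_const.prodMk continuous_id) ?_
    exact fun s => ⟨hz, trivial⟩
  have agree : ∀ (z₀ z : Z), z ∈ N z₀ → ∀ s, G z (z, s) = G z₀ (z, s) := by
    intro z₀ z hz
    have h1 := slice z z (hNm z)
    have h2 := slice z₀ z hz
    have he : p ∘ (fun s : I => G z (z, s)) = p ∘ (fun s : I => G z₀ (z, s)) := by
      funext s
      simp only [Function.comp]
      rw [hGp z z (hNm z) s, hGp z₀ z hz s]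
    have h00 : G z (z, 0) = G z₀ (z, 0) := by rw [hG0 z z (hNm z), hG0 z₀ z hz]
    exact fun s => congrFun (hp.eq_of_comp_eq h1 h2 he 0 h00) s
  refine ⟨fun zs => G zs.1 zs, ?_, ?_, ?_⟩
  · rw [continuous_iff_continuousAt]
    rintro ⟨z₀, s₀⟩
    have hnhds : (N z₀) ×ˢ (Set.univ : Set I) ∈ nhds (z₀, s₀) :=
      ((hNo z₀).prod isOpen_univ).mem_nhds ⟨hNm z₀, trivial⟩
    refine ContinuousAt.congr ((hGc z₀).continuousAt hnhds) ?_
    refine Filter.eventuallyEq_of_mem hnhds ?_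
    rintro ⟨z, s⟩ hzs
    exact (agree z₀ z hzs.1 s).symm
  · exact fun z s => hGp z z (hNm z) s
  · exact fun z => hG0 z z (hNm z)

lemma radial_joined {E : Type*} [NormedAddCommGroup E] [NormedSpace ℝ E]
    {c : E} {r s : ℝ} (hr : 0 < r) (hs : 0 < s) {x : E}
    (hx : x ∈ Metric.ball c r \ {c}) (hsx : s ≤ ‖x - c‖) :
    JoinedIn (Metric.ball c r \ {c}) x (c + (s / ‖x - c‖) • (x - c)) := by
  have hxc : x ≠ c := fun hcc => hx.2 (by simp [hcc])
  have hxc0 : (0:ℝ) < ‖x - c‖ := by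
    rw [norm_pos_iff]
    exact sub_ne_zero_of_ne hxc
  have hxr : ‖x - c‖ < r := by
    have := hx.1
    rwa [Metric.mem_ball, dist_eq_norm] at this
  set d : ℝ := s / ‖x - c‖ with hd
  have hd0 : 0 < d := div_pos hs hxc0
  have hd1 : d ≤ 1 := by
    rw [hd, div_le_one hxc0]
    exact hsx
  have key : ∀ t : I, c + ((1:ℝ) - t * (1 - d)) • (x - c) ∈ Metric.ball c r \ {c} := by
    intro t
    have ht0 : (0:ℝ) ≤ t := t.2.1
    have ht1 : (t:ℝ) ≤ 1 := t.2.2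
    have hlam_lb : d ≤ 1 - t * (1 - d) := by nlinarith
    have hlam_ub : 1 - (t:ℝ) * (1 - d) ≤ 1 := by nlinarith
    have hnorm : ‖c + ((1:ℝ) - t * (1 - d)) • (x - c) - c‖ = (1 - t * (1 - d)) * ‖x - c‖ := by
      rw [add_sub_cancel_left, norm_smul, Real.norm_eq_abs,
        abs_of_pos (lt_of_lt_of_le hd0 hlam_lb)]
    constructor
    · rw [Metric.mem_ball, dist_eq_norm, hnorm]
      calc (1 - (t:ℝ) * (1 - d)) * ‖x - c‖ ≤ 1 * ‖x - c‖ := by nlinarith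
        _ < r := by rwa [one_mul]
    · intro hmem
      rw [Set.mem_singleton_iff] at hmem
      have : ‖c + ((1:ℝ) - t * (1 - d)) • (x - c) - c‖ = 0 := by rw [hmem]; simp
      rw [hnorm] at this
      nlinarith
  refine ⟨⟨⟨fun t => c + ((1:ℝ) - t * (1 - d)) • (x - c), ?_⟩, ?_, ?_⟩, key⟩
  · fun_prop
  · simp
  · show c + ((1:ℝ) - 1 * (1 - d)) • (x - c) = c + d • (x - c)
    norm_num

lemma isPathConnected_punctured_ball {E : Type*} [NormedAddCommGroup E] [NormedSpace ℝ E]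
    (h : 1 < Module.rank ℝ E) (c : E) {r : ℝ} (hr : 0 < r) :
    IsPathConnected (Metric.ball c r \ {c}) := by
  have hnt : Nontrivial E := by
    rw [← rank_pos_iff_nontrivial (R := ℝ)]
    exact lt_trans zero_lt_one h
  rw [isPathConnected_iff]
  constructor
  · obtain ⟨v, hv⟩ := exists_ne (0 : E)
    have hv0 : (0:ℝ) < ‖v‖ := norm_pos_iff.mpr hv
    refine ⟨c + (r / 2 / ‖v‖) • v, ?_, ?_⟩
    · rw [Metric.mem_ball, dist_eq_norm, add_sub_cancel_left, norm_smul, Real.norm_eq_abs,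
        abs_of_pos (by positivity)]
      rw [div_mul_cancel₀ _ (ne_of_gt hv0)]
      linarith
    · intro hmem
      rw [Set.mem_singleton_iff] at hmem
      have h2 : ‖(r / 2 / ‖v‖) • v‖ = 0 := by
        rw [show (r / 2 / ‖v‖) • v = c + (r / 2 / ‖v‖) • v - c by abel, hmem]
        simp
      rw [norm_smul, Real.norm_eq_abs, abs_of_pos (by positivity),
        div_mul_cancel₀ _ (ne_of_gt hv0)] at h2
      linarith
  · intro x hx y hy
    have hxc : x ≠ c := fun hcc => hx.2 (by simp [hcc])
    have hyc : y ≠ c := fun hcc => hy.2 (by simp [hcc])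
    have hxc0 : (0:ℝ) < ‖x - c‖ := by rw [norm_pos_iff]; exact sub_ne_zero_of_ne hxc
    have hyc0 : (0:ℝ) < ‖y - c‖ := by rw [norm_pos_iff]; exact sub_ne_zero_of_ne hyc
    have hxr : ‖x - c‖ < r := by
      have := hx.1; rwa [Metric.mem_ball, dist_eq_norm] at this
    set s : ℝ := min ‖x - c‖ ‖y - c‖ with hsdef
    have hs0 : 0 < s := lt_min hxc0 hyc0
    have hsr : s < r := lt_of_le_of_lt (min_le_left _ _) hxr
    have j1 := radial_joined hr hs0 hx (min_le_left _ _)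
    have j2 := radial_joined hr hs0 hy (min_le_right _ _)
    have hsphere : Metric.sphere c s ⊆ Metric.ball c r \ {c} := by
      intro z hz
      rw [Metric.mem_sphere] at hz
      constructor
      · rw [Metric.mem_ball, hz]; exact hsr
      · intro hmem
        rw [Set.mem_singleton_iff] at hmem
        rw [hmem, dist_self] at hz
        linarith
    have hx' : c + (s / ‖x - c‖) • (x - c) ∈ Metric.sphere c s := by
      rw [Metric.mem_sphere, dist_eq_norm, add_sub_cancel_left, norm_smul, Real.norm_eq_abs,
        abs_of_pos (by positivity), div_mul_cancel₀ _ (ne_of_gt hxc0)]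
    have hy' : c + (s / ‖y - c‖) • (y - c) ∈ Metric.sphere c s := by
      rw [Metric.mem_sphere, dist_eq_norm, add_sub_cancel_left, norm_smul, Real.norm_eq_abs,
        abs_of_pos (by positivity), div_mul_cancel₀ _ (ne_of_gt hyc0)]
    have jmid := ((isPathConnected_sphere h c hs0.le).joinedIn _ hx' _ hy').mono hsphere
    exact (j1.trans jmid).trans j2.symm

set_option maxHeartbeats 2000000 in
lemma sphere_lift {X XT : Type*} [TopologicalSpace X] [TopologicalSpace XT]
    {p : XT → X} (hp : IsCoveringMap p) {m : ℕ} (hm : 2 ≤ m)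
    (b : Metric.sphere (0 : EuclideanSpace ℝ (Fin (m + 1))) 1)
    (α : C(Metric.sphere (0 : EuclideanSpace ℝ (Fin (m + 1))) 1, X))
    (xt₀ : XT) (hxt₀ : p xt₀ = α b) :
    ∃ at' : Metric.sphere (0 : EuclideanSpace ℝ (Fin (m + 1))) 1 → XT,
      Continuous at' ∧ (∀ s, p (at' s) = α s) ∧ at' b = xt₀ := by
  classical
  haveI : Fact (Module.finrank ℝ (EuclideanSpace ℝ (Fin (m + 1))) = m + 1) :=
    ⟨finrank_euclideanSpace_fin⟩
  set N : Metric.sphere (0 : EuclideanSpace ℝ (Fin (m + 1))) 1 := -b with hNdef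
  have hbN : b ≠ N := ne_neg_of_mem_unit_sphere ℝ b
  set Φ := stereographic' m N with hΦ
  have hΦsrc : Φ.source = {N}ᶜ := stereographic'_source N
  have hΦtgt : Φ.target = Set.univ := stereographic'_target N
  have hbsrc : b ∈ Φ.source := by
    rw [hΦsrc]; exact Set.mem_compl_singleton_iff.mpr hbN
  have hsrc : ∀ z : ↥({N}ᶜ : Set (Metric.sphere (0 : EuclideanSpace ℝ (Fin (m + 1))) 1)),
      (z : Metric.sphere (0 : EuclideanSpace ℝ (Fin (m + 1))) 1) ∈ Φ.source :=
    fun z => by rw [hΦsrc]; exact z.2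
  have hΦsymm_cont : Continuous ⇑Φ.symm := by
    have h := Φ.continuousOn_symm
    rw [hΦtgt] at h
    exact continuousOn_univ.mp h
  have hΦZ : Continuous fun z : ↥({N}ᶜ : Set (Metric.sphere (0 : EuclideanSpace ℝ
      (Fin (m + 1))) 1)) => Φ (z : Metric.sphere (0 : EuclideanSpace ℝ (Fin (m + 1))) 1) :=
    Φ.continuousOn_toFun.comp_continuous continuous_subtype_val hsrc
  set Hc : ↥({N}ᶜ : Set (Metric.sphere (0 : EuclideanSpace ℝ (Fin (m + 1))) 1)) × I → X :=
    fun zt => α (Φ.symm ((1 - (zt.2 : ℝ)) • (Φ b) + (zt.2 : ℝ) • (Φ (zt.1 : Metric.sphere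
      (0 : EuclideanSpace ℝ (Fin (m + 1))) 1)))) with hHc
  have hHccont : Continuous Hc := by
    refine α.continuous.comp (hΦsymm_cont.comp ?_)
    have h1 : Continuous fun zt : ↥({N}ᶜ : Set (Metric.sphere (0 : EuclideanSpace ℝ
        (Fin (m + 1))) 1)) × I => (zt.2 : ℝ) := continuous_subtype_val.comp continuous_snd
    exact ((continuous_const.sub h1).smul continuous_const).add
      (h1.smul (hΦZ.comp continuous_fst))
  have hHc0 : ∀ z, Hc (z, 0) = α b := by
    intro z
    rw [hHc]
    simp only [Set.Icc.coe_zero, sub_zero, one_smul, zero_smul, add_zero]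
    rw [Φ.left_inv hbsrc]
  have hHc1 : ∀ z, Hc (z, 1) = α (z : Metric.sphere (0 : EuclideanSpace ℝ (Fin (m + 1))) 1) := by
    intro z
    rw [hHc]
    simp only [Set.Icc.coe_one, sub_self, zero_smul, one_smul, zero_add]
    rw [Φ.left_inv (hsrc z)]
  obtain ⟨G, hGc, hGp, hG0⟩ := covering_homotopy_lift_s12 hp hHccont
    (continuous_const : Continuous fun _ : ↥({N}ᶜ : Set (Metric.sphere (0 : EuclideanSpace ℝ
      (Fin (m + 1))) 1)) => xt₀) (fun z => by rw [hHc0 z]; exact hxt₀)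
  set g : ↥({N}ᶜ : Set (Metric.sphere (0 : EuclideanSpace ℝ (Fin (m + 1))) 1)) → XT :=
    fun z => G (z, 1) with hg
  have hgc : Continuous g := hGc.comp (continuous_id.prodMk continuous_const)
  have hgp : ∀ z, p (g z) = α (z : Metric.sphere (0 : EuclideanSpace ℝ (Fin (m + 1))) 1) :=
    fun z => by rw [hg]; rw [hGp, hHc1]
  have hb' : b ∈ ({N}ᶜ : Set (Metric.sphere (0 : EuclideanSpace ℝ (Fin (m + 1))) 1)) :=
    Set.mem_compl_singleton_iff.mpr hbN
  have hgb : g ⟨b, hb'⟩ = xt₀ := by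
    have h1 : Continuous fun t : I => G (⟨b, hb'⟩, t) :=
      hGc.comp (continuous_const.prodMk continuous_id)
    have he : p ∘ (fun t : I => G (⟨b, hb'⟩, t)) = p ∘ (fun _ : I => xt₀) := by
      funext t
      simp only [Function.comp]
      rw [hGp, hxt₀, hHc]
      simp only
      rw [show ((1 : ℝ) - (t : ℝ)) • (Φ b) + (t : ℝ) • (Φ b) = Φ b by rw [← add_smul]; norm_num]
      rw [Φ.left_inv hbsrc]
    have h2 := hp.eq_of_comp_eq h1 continuous_const he 0 (hG0 ⟨b, hb'⟩)
    exact congrFun h2 1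
  -- extension across N
  haveI hneN : Nonempty (p ⁻¹' {α N}) := by
    set Ψ' := stereographic' m b
    have hs : Ψ'.source = {b}ᶜ := stereographic'_source b
    have ht : Ψ'.target = Set.univ := stereographic'_target b
    have hNs : N ∈ Ψ'.source := by rw [hs]; exact Set.mem_compl_singleton_iff.mpr (Ne.symm hbN)
    have hcont : Continuous ⇑Ψ'.symm := continuousOn_univ.mp (ht ▸ Ψ'.continuousOn_symm)
    obtain ⟨v, hv⟩ : ∃ v : EuclideanSpace ℝ (Fin m), v ≠ 0 :=
      ⟨EuclideanSpace.single (⟨0, by omega⟩ : Fin m) (1 : ℝ),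
        EuclideanSpace.single_eq_zero_iff.not.mpr one_ne_zero⟩
    obtain ⟨s₁, hs₁def⟩ : ∃ s₁, s₁ = Ψ'.symm (Ψ' N + v) := ⟨_, rfl⟩
    have hs₁ : s₁ ≠ N := by
      intro hh
      have h2 : Ψ' s₁ = Ψ' N + v := by rw [hs₁def]; exact Ψ'.right_inv (by rw [ht]; trivial)
      rw [hh] at h2
      exact hv (by simpa using h2.symm)
    obtain ⟨Γ, hΓ, -⟩ := hp.exists_path_lifts
      ⟨fun t : I => α (Ψ'.symm (Ψ' N + (1 - (t : ℝ)) • v)), α.continuous.comp (hcont.comp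
        (continuous_const.add ((continuous_const.sub continuous_subtype_val).smul
          continuous_const)))⟩
      (g ⟨s₁, Set.mem_compl_singleton_iff.mpr hs₁⟩) (by rw [hgp]; simp [hs₁def])
    refine ⟨⟨Γ 1, ?_⟩⟩
    have h1 : p (Γ 1) = α (Ψ'.symm (Ψ' N + (1 - ((1 : I) : ℝ)) • v)) := congrFun hΓ 1
    rw [Set.mem_preimage, Set.mem_singleton_iff, h1, Set.Icc.coe_one, sub_self, zero_smul,
      add_zero, Ψ'.left_inv hNs]
  set T := (hp (α N)).toTrivialization with hT
  have hV : α N ∈ T.baseSet := (hp (α N)).mem_toTrivialization_baseSet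
  set Ψ := stereographic' m b with hΨ
  have hΨsrc : Ψ.source = {b}ᶜ := stereographic'_source b
  have hΨtgt : Ψ.target = Set.univ := stereographic'_target b
  have hNsrc : N ∈ Ψ.source := by
    rw [hΨsrc]; exact Set.mem_compl_singleton_iff.mpr (Ne.symm hbN)
  set O₀ := Ψ.source ∩ α ⁻¹' T.baseSet with hO₀
  have hO₀open : IsOpen O₀ := Ψ.open_source.inter (T.open_baseSet.preimage α.continuous)
  have hNO₀ : N ∈ O₀ := ⟨hNsrc, hV⟩
  have hImopen : IsOpen (Ψ '' O₀) :=
    Ψ.isOpen_image_of_subset_source hO₀open Set.inter_subset_left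
  obtain ⟨r, hr0, hball⟩ := Metric.isOpen_iff.mp hImopen (Ψ N) ⟨N, hNO₀, rfl⟩
  set Ω := Ψ.source ∩ Ψ ⁻¹' (Metric.ball (Ψ N) r) with hΩ
  have hΩopen : IsOpen Ω :=
    Ψ.continuousOn_toFun.isOpen_inter_preimage Ψ.open_source Metric.isOpen_ball
  have hNΩ : N ∈ Ω := ⟨hNsrc, Metric.mem_ball_self hr0⟩
  have hΩV : ∀ s ∈ Ω, α s ∈ T.baseSet := by
    rintro s ⟨hs1, hs2⟩
    obtain ⟨s', hs'O₀, hs's⟩ := hball hs2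
    have h3 : s' = s := Ψ.injOn hs'O₀.1 hs1 hs's
    rw [← h3]
    exact hs'O₀.2
  have hbΩ : b ∉ Ω := by
    rintro ⟨hb1, -⟩
    rw [hΨsrc] at hb1
    exact hb1 rfl
  have hrank : 1 < Module.rank ℝ (EuclideanSpace ℝ (Fin m)) := by
    rw [← Module.finrank_eq_rank ℝ (EuclideanSpace ℝ (Fin m)), finrank_euclideanSpace_fin]
    exact_mod_cast (by omega : 1 < m)
  have hpb := isPathConnected_punctured_ball hrank (Ψ N) hr0
  have himg : Ψ.symm '' (Metric.ball (Ψ N) r \ {Ψ N}) = Ω \ {N} := by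
    ext s
    constructor
    · rintro ⟨y, ⟨hy1, hy2⟩, rfl⟩
      have hyt : y ∈ Ψ.target := by rw [hΨtgt]; trivial
      have hys : Ψ.symm y ∈ Ψ.source := Ψ.map_target hyt
      have hyr : Ψ (Ψ.symm y) = y := Ψ.right_inv hyt
      refine ⟨⟨hys, by rw [Set.mem_preimage, hyr]; exact hy1⟩, ?_⟩
      intro hmem
      rw [Set.mem_singleton_iff] at hmem
      apply hy2
      rw [Set.mem_singleton_iff, ← hyr, hmem]
    · rintro ⟨⟨hs1, hs2⟩, hs3⟩
      rw [Set.mem_singleton_iff] at hs3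
      refine ⟨Ψ s, ⟨hs2, ?_⟩, Ψ.left_inv hs1⟩
      intro hmem
      rw [Set.mem_singleton_iff] at hmem
      exact hs3 (Ψ.injOn hs1 hNsrc hmem)
  have hPconn : IsPreconnected (Ω \ {N}) := by
    rw [← himg]
    have hsub : Metric.ball (Ψ N) r \ {Ψ N} ⊆ Ψ.target := by
      rw [hΨtgt]; exact Set.subset_univ _
    exact ((hpb.image' (Ψ.continuousOn_symm.mono hsub)).isConnected).isPreconnected
  set w₁ : EuclideanSpace ℝ (Fin m) :=
    Ψ N + (r / 2) • EuclideanSpace.single (⟨0, by omega⟩ : Fin m) (1 : ℝ) with hw₁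
  have hw₁mem : w₁ ∈ Metric.ball (Ψ N) r \ {Ψ N} := by
    have hnorm : ‖w₁ - Ψ N‖ = r / 2 := by
      rw [hw₁, add_sub_cancel_left, norm_smul, Real.norm_eq_abs, abs_of_pos (by linarith),
        EuclideanSpace.norm_single]
      simp
    constructor
    · rw [Metric.mem_ball, dist_eq_norm, hnorm]; linarith
    · intro hmem
      rw [Set.mem_singleton_iff] at hmem
      rw [hmem] at hnorm
      simp only [sub_self, norm_zero] at hnorm
      linarith
  set u₁ := Ψ.symm w₁ with hu₁def
  have hu₁ : u₁ ∈ Ω \ {N} := himg ▸ Set.mem_image_of_mem _ hw₁mem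
  have hu₁N : u₁ ≠ N := fun hh => hu₁.2 (Set.mem_singleton_iff.mpr hh)
  set gU : Metric.sphere (0 : EuclideanSpace ℝ (Fin (m + 1))) 1 → XT := fun s =>
    if h : s = N then xt₀ else g ⟨s, Set.mem_compl_singleton_iff.mpr h⟩ with hgU
  have hgUeq : ∀ s (h : s ≠ N), gU s = g ⟨s, Set.mem_compl_singleton_iff.mpr h⟩ :=
    fun s h => dif_neg h
  have hgUcont : ContinuousOn gU ({N}ᶜ :
      Set (Metric.sphere (0 : EuclideanSpace ℝ (Fin (m + 1))) 1)) := by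
    rw [continuousOn_iff_continuous_restrict]
    have h4 : Set.domRestrict ({N}ᶜ : Set (Metric.sphere (0 : EuclideanSpace ℝ
        (Fin (m + 1))) 1)) gU = fun w => g w := by
      funext w
      rw [Set.domRestrict_apply, hgUeq w.1 (Set.mem_compl_singleton_iff.mp w.2)]
    rw [h4]
    exact hgc
  have hgUp : ∀ s, s ≠ N → p (gU s) = α s := by
    intro s h
    rw [hgUeq s h, hgp]
  have hgUb : gU b = xt₀ := by rw [hgUeq b hbN]; exact hgb
  set jj := (T (gU u₁)).2 with hjj
  set β : Metric.sphere (0 : EuclideanSpace ℝ (Fin (m + 1))) 1 → XT := fun s =>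
    T.toPartialHomeomorph.symm (α s, jj) with hβ
  have hβtarget : ∀ s ∈ Ω, (α s, jj) ∈ T.target := fun s hs => T.mem_target.mpr (hΩV s hs)
  have hβp : ∀ s ∈ Ω, p (β s) = α s := fun s hs => T.proj_symm_apply (hβtarget s hs)
  have hβcont : ContinuousOn β Ω := by
    refine ContinuousOn.comp T.toPartialHomeomorph.continuousOn_symm
      ((α.continuous.prodMk continuous_const).continuousOn) ?_
    exact fun s hs => hβtarget s hs
  have hbase : gU u₁ = β u₁ := by
    have hsrc' : gU u₁ ∈ T.source := by
      rw [T.mem_source, hgUp u₁ hu₁N]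
      exact hΩV u₁ hu₁.1
    rw [hβ]
    simp only
    rw [show α u₁ = p (gU u₁) from (hgUp u₁ hu₁N).symm]
    exact (T.symm_apply_mk_proj hsrc').symm
  have heqOn : Set.EqOn gU β (Ω \ {N}) := by
    refine hp.eqOn_of_comp_eqOn hPconn (hgUcont.mono ?_) (hβcont.mono Set.diff_subset)
      ?_ hu₁ hbase
    · exact fun s hs => hs.2
    · intro s hs
      simp only [Function.comp]
      rw [hgUp s (fun hh => hs.2 (Set.mem_singleton_iff.mpr hh)), hβp s hs.1]
  refine ⟨fun s => if s ∈ Ω then β s else gU s, ?_, ?_, ?_⟩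
  · rw [continuous_iff_continuousAt]
    intro s₀
    by_cases hs₀ : s₀ ∈ Ω
    · refine ContinuousAt.congr (hβcont.continuousAt (hΩopen.mem_nhds hs₀)) ?_
      refine Filter.eventuallyEq_of_mem (hΩopen.mem_nhds hs₀) ?_
      intro s hs
      exact (if_pos hs).symm
    · have hs₀N : s₀ ≠ N := fun hh => hs₀ (hh ▸ hNΩ)
      have hnhds : ({N}ᶜ : Set (Metric.sphere (0 : EuclideanSpace ℝ (Fin (m + 1))) 1)) ∈
          nhds s₀ := isOpen_compl_singleton.mem_nhds (Set.mem_compl_singleton_iff.mpr hs₀N)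
      refine ContinuousAt.congr (hgUcont.continuousAt hnhds) ?_
      refine Filter.eventuallyEq_of_mem hnhds ?_
      intro s hs
      dsimp only
      by_cases hsΩ : s ∈ Ω
      · rw [if_pos hsΩ]
        exact heqOn ⟨hsΩ, hs⟩
      · rw [if_neg hsΩ]
  · intro s
    dsimp only
    by_cases hs : s ∈ Ω
    · rw [if_pos hs]
      exact hβp s hs
    · have hsN : s ≠ N := fun hh => hs (hh ▸ hNΩ)
      rw [if_neg hs]
      exact hgUp s hsN
  · dsimp only
    rw [if_neg hbΩ]
    exact hgUb


/-- If `HT` is a homotopy from `f0` to `h ∘ f0` and `φ(t) = q (HT (x̃₀, t))` is the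
corresponding loop at `f x₀`, then for every `m ≥ 2` and every pointed map
`α : S^m → X`, the Whitehead-product obstruction vanishes: there is
`F : S^m × I → Y` with `F(s,0) = F(s,1) = f (α s)` and `F(b,t) = φ(t)`. -/
theorem stmt_12 {X Y XT YT : Type*} [TopologicalSpace X] [TopologicalSpace Y]
    [TopologicalSpace XT] [TopologicalSpace YT]
    [PathConnectedSpace X] [PathConnectedSpace Y]
    [LocallyPathConnectedSpace X] [LocallyPathConnectedSpace Y]
    [SimplyConnectedSpace XT] [SimplyConnectedSpace YT]
    [LocallyPathConnectedSpace XT] [LocallyPathConnectedSpace YT]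
    (p : XT → X) (q : YT → Y) (hp : IsCoveringMap p) (hq : IsCoveringMap q)
    (f : X → Y) (hf : Continuous f)
    (x₀ : X) (xt₀ : XT) (hxt₀ : p xt₀ = x₀)
    (f0 : XT → YT) (hf0 : IsLift p q f f0)
    (h : YT ≃ₜ YT) (hh : IsDeck q h)
    (HT : C(XT × I, YT))
    (hHT0 : ∀ x, HT (x, 0) = f0 x) (hHT1 : ∀ x, HT (x, 1) = h (f0 x))
    (m : ℕ) (hm : 2 ≤ m)
    (b : Metric.sphere (0 : EuclideanSpace ℝ (Fin (m + 1))) 1)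
    (α : C(Metric.sphere (0 : EuclideanSpace ℝ (Fin (m + 1))) 1, X))
    (hα : α b = x₀) :
    ∃ F : C(Metric.sphere (0 : EuclideanSpace ℝ (Fin (m + 1))) 1 × I, Y),
      (∀ s, F (s, 0) = f (α s)) ∧ (∀ s, F (s, 1) = f (α s)) ∧
      (∀ t : I, F (b, t) = q (HT (xt₀, t))) := by
  obtain ⟨at', hat'c, hat'p, hat'b⟩ := sphere_lift hp hm b α xt₀ (by rw [hxt₀, hα] : p xt₀ = α b)
  refine ⟨⟨fun st => q (HT (at' st.1, st.2)), ?_⟩, ?_, ?_, ?_⟩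
  · exact hq.continuous.comp (HT.continuous.comp
      ((hat'c.comp continuous_fst).prodMk continuous_snd))
  · intro s
    simp only [ContinuousMap.coe_mk]
    rw [hHT0, hf0.2, hat'p]
  · intro s
    simp only [ContinuousMap.coe_mk]
    rw [hHT1, hh, hf0.2, hat'p]
  · intro t
    simp only [ContinuousMap.coe_mk]
    rw [hat'b]
end
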